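/- arXiv:1704.09014 — 9 statements merged into one kernel-verified Lean document; each statement's English description precedes it below -/
import Mathlib

section
/- (No-future lemma.) Let ι be a finite type, m ≥ 1, and S_1, …, S_m subsets of ι; write U_i = S_1 ∪ ⋯ ∪ S_i. Let M_1, …, M_m be real ι×ι matrices such that for each i, (M_i) y x = 0 whenever x ∈ U_i and y ∉ U_i. If v : ι → ℝ satisfies v x = 0 for all x ∉ S_1, then the vector (exp(-M_m) * exp(-M_{m-1}) * ⋯ * exp(-M_1)).mulVec v vanishes at every x ∉ U_m. In particular, for a staged SSMC schedule H(t) = L_j + W on [j-1,j), where each Laplacian L_j is supported on the vertex set V(G_j) of a subgraph and W is diagonal, the process at time j has zero probability at any node outside ⋃_{i≤j} V(G_i). -/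
open Matrix
open scoped Nat

/-- Powers of a matrix that keeps mass inside `U` keep vectors supported in `U`
supported in `U`. -/
lemma pow_mulVec_eq_zero {ι : Type*} [Fintype ι] [DecidableEq ι]
    (A : Matrix ι ι ℝ) (U : Set ι)
    (h : ∀ x y : ι, x ∈ U → y ∉ U → A y x = 0)
    (w : ι → ℝ) (hw : ∀ y, y ∉ U → w y = 0) :
    ∀ n : ℕ, ∀ y, y ∉ U → (A ^ n).mulVec w y = 0 := by
  intro n
  induction n with
  | zero => intro y hy; simpa [Matrix.one_mulVec] using hw y hy
  | succ n ih =>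
      intro y hy
      rw [pow_succ', ← Matrix.mulVec_mulVec]
      show ∑ x, A y x * ((A ^ n).mulVec w) x = 0
      refine Finset.sum_eq_zero fun x _ => ?_
      by_cases hx : x ∈ U
      · rw [h x y hx hy, zero_mul]
      · rw [ih x hx, mul_zero]

/-- The exponential of a matrix that keeps mass inside `U` keeps vectors supported
in `U` supported in `U`. -/
lemma exp_mulVec_eq_zero {ι : Type*} [Fintype ι] [DecidableEq ι]
    (A : Matrix ι ι ℝ) (U : Set ι)
    (h : ∀ x y : ι, x ∈ U → y ∉ U → A y x = 0)
    (w : ι → ℝ) (hw : ∀ y, y ∉ U → w y = 0) :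
    ∀ y, y ∉ U → (NormedSpace.exp A).mulVec w y = 0 := by
  intro y hy
  letI : NormedRing (Matrix ι ι ℝ) := Matrix.linftyOpNormedRing
  letI : NormedAlgebra ℝ (Matrix ι ι ℝ) := Matrix.linftyOpNormedAlgebra
  have hsum : HasSum (fun n : ℕ => ((n ! : ℝ)⁻¹) • A ^ n) (NormedSpace.exp A) :=
    NormedSpace.exp_series_hasSum_exp' A
  -- the evaluation map `B ↦ (B.mulVec w) y` as a continuous linear map
  let phi : Matrix ι ι ℝ →ₗ[ℝ] ℝ :=
    { toFun := fun B => B.mulVec w y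
      map_add' := fun B C => by simp [Matrix.add_mulVec]
      map_smul' := fun c B => by simp [Matrix.smul_mulVec] }
  have hphi : Continuous phi := phi.continuous_of_finiteDimensional
  have h2 : HasSum (fun n : ℕ => phi (((n ! : ℝ)⁻¹) • A ^ n)) (phi (NormedSpace.exp A)) :=
    hsum.mapL ⟨phi, hphi⟩
  have h3 : ∀ n : ℕ, phi (((n ! : ℝ)⁻¹) • A ^ n) = 0 := by
    intro n
    have := pow_mulVec_eq_zero A U h w hw n y hy
    simp only [phi, LinearMap.coe_mk, AddHom.coe_mk, Matrix.smul_mulVec,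
      Pi.smul_apply, this, smul_zero]
  have h4 : HasSum (fun n : ℕ => phi (((n ! : ℝ)⁻¹) • A ^ n)) 0 := by
    simpa [h3] using hasSum_zero (α := ℝ) (β := ℕ)
  exact (h2.unique h4)

/-- No-future lemma: if each stage generator `M i` never moves mass out of the union
`U i = S 0 ∪ ⋯ ∪ S i` of the stage supports, then the staged semigroup
`exp(-M (m-1)) * ⋯ * exp(-M 0)` applied to a vector supported in `S 0` vanishes outside
the union of all the stage supports. -/
theorem ssmc_no_future {ι : Type*} [Fintype ι] [DecidableEq ι]
    (m : ℕ) (hm : 1 ≤ m) (S : Fin m → Set ι) (M : Fin m → Matrix ι ι ℝ)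
    (hM : ∀ i : Fin m, ∀ x y : ι,
      x ∈ ⋃ k ∈ Set.Iic i, S k → y ∉ ⋃ k ∈ Set.Iic i, S k → M i y x = 0)
    (v : ι → ℝ) (hv : ∀ x, x ∉ S ⟨0, hm⟩ → v x = 0) :
    ∀ x, x ∉ ⋃ k, S k →
      ((List.ofFn (fun i : Fin m => NormedSpace.exp (-(M i)))).reverse.prod).mulVec v x = 0 := by
  set f : Fin m → Matrix ι ι ℝ := fun i => NormedSpace.exp (-(M i)) with hf
  have key : ∀ n : ℕ, n ≤ m → ∀ y : ι,
      (∀ k : Fin m, (k : ℕ) < n → y ∉ S k) → y ∉ S ⟨0, hm⟩ →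
      (((List.ofFn f).take n).reverse.prod).mulVec v y = 0 := by
    intro n
    induction n with
    | zero =>
        intro _ y _ hy0
        simpa [Matrix.one_mulVec] using hv y hy0
    | succ n ih =>
        intro hn y hy hy0
        have hnm : n < m := hn
        have htake : (List.ofFn f).take (n + 1) = (List.ofFn f).take n ++ [f ⟨n, hnm⟩] := by
          rw [List.take_succ]
          congr 1
          simp [List.getElem?_eq_getElem, (by simpa using hnm : n < (List.ofFn f).length),
            List.ofFnNthVal, hnm]
        rw [htake, List.reverse_append, List.reverse_singleton, List.singleton_append,
          List.prod_cons, ← Matrix.mulVec_mulVec]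
        -- apply the exponential preservation lemma with `U = ⋃ k ≤ n, S k`
        refine exp_mulVec_eq_zero (-(M ⟨n, hnm⟩)) (⋃ k ∈ Set.Iic (⟨n, hnm⟩ : Fin m), S k)
          (fun x z hx hz => by rw [Matrix.neg_apply, hM ⟨n, hnm⟩ x z hx hz, neg_zero])
          _ ?_ y ?_
        · intro z hz
          refine ih (le_of_lt hnm) z (fun k hk => ?_) ?_
          · exact fun hzk => hz (Set.mem_biUnion (Set.mem_Iic.mpr (Fin.le_def.mpr hk.le)) hzk)
          · exact fun hzk => hz (Set.mem_biUnion (Set.mem_Iic.mpr (by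
              simp [Fin.le_def])) hzk)
        · intro hyU
          rcases Set.mem_iUnion₂.mp hyU with ⟨k, hk, hyk⟩
          exact hy k (Nat.lt_succ_of_le (Fin.le_def.mp hk)) hyk
  intro x hx
  have hx' : ∀ k : Fin m, x ∉ S k := fun k hk => hx (Set.mem_iUnion.mpr ⟨k, hk⟩)
  have := key m le_rfl x (fun k _ => hx' k) (hx' ⟨0, hm⟩)
  simpa [List.take_of_length_le (by simp : (List.ofFn f).length ≤ m)] using this
end

section
/- Let E, w, t be real numbers with w > 0, and set μ = (E + 2w)/2 and Δ = √(E²/4 + w²). For the 2×2 matrix H = !![E + w, -w; -w, w], one has the exact closed form exp(-t•H) = e^{-μt} • ( cosh(Δt) • 1 - (sinh(Δt)/Δ) • (H - μ•1) ). In particular, the transition amplitudes from the first basis vector are (exp(-t•H))₀₀ = e^{-μt}·(cosh(Δt) - (E/(2Δ))·sinh(Δt)) and (exp(-t•H))₁₀ = e^{-μt}·(w/Δ)·sinh(Δt). -/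
open Matrix

set_option maxHeartbeats 1600000 in
/-- Exact closed form for the SSMC semigroup on a single parent–child edge:
for `H = !![E + w, -w; -w, w]`, with `μ = (E + 2w)/2` and `Δ = √(E²/4 + w²)`,
`exp(-t•H) = e^{-μt} • (cosh(Δt)•1 - (sinh(Δt)/Δ)•(H - μ•1))`, and in particular
the transition amplitudes from the first basis vector are as displayed. -/
theorem ssmc_two_by_two_exact (E w t : ℝ) (hw : 0 < w) :
    letI H : Matrix (Fin 2) (Fin 2) ℝ := !![E + w, -w; -w, w]
    letI μ : ℝ := (E + 2 * w) / 2
    letI Δ : ℝ := Real.sqrt (E ^ 2 / 4 + w ^ 2)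
    NormedSpace.exp (-t • H)
        = Real.exp (-μ * t) •
          (Real.cosh (Δ * t) • (1 : Matrix (Fin 2) (Fin 2) ℝ)
            - (Real.sinh (Δ * t) / Δ) • (H - μ • (1 : Matrix (Fin 2) (Fin 2) ℝ))) ∧
      (NormedSpace.exp (-t • H)) 0 0
        = Real.exp (-μ * t) * (Real.cosh (Δ * t) - E / (2 * Δ) * Real.sinh (Δ * t)) ∧
      (NormedSpace.exp (-t • H)) 1 0
        = Real.exp (-μ * t) * (w / Δ) * Real.sinh (Δ * t) := by
  have hΔpos : 0 < Real.sqrt (E ^ 2 / 4 + w ^ 2) := Real.sqrt_pos.2 (by positivity)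
  set Δ : ℝ := Real.sqrt (E ^ 2 / 4 + w ^ 2) with hΔdef
  have hΔ2 : Δ ^ 2 = E ^ 2 / 4 + w ^ 2 := Real.sq_sqrt (by positivity)
  have hΔ : Δ ≠ 0 := hΔpos.ne'
  set H : Matrix (Fin 2) (Fin 2) ℝ := !![E + w, -w; -w, w] with hH
  set μ : ℝ := (E + 2 * w) / 2 with hμ
  set P : Matrix (Fin 2) (Fin 2) ℝ := !![w, w; E / 2 - Δ, E / 2 + Δ] with hP
  have hdet : P.det = 2 * w * Δ := by
    simp [hP, Matrix.det_fin_two_of]; ring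
  have hPu : IsUnit P.det := by
    rw [hdet]; exact isUnit_iff_ne_zero.2 (by positivity)
  haveI : Invertible P := P.invertibleOfIsUnitDet hPu
  set D : Matrix (Fin 2) (Fin 2) ℝ :=
    Matrix.diagonal ![-t * (μ + Δ), -t * (μ - Δ)] with hD
  have key : -t • H = P * D * P⁻¹ := by
    rw [eq_comm, Matrix.mul_inv_eq_iff_eq_mul_of_invertible]
    ext i j
    fin_cases i <;> fin_cases j <;>
      simp [hP, hD, hH, hμ, Matrix.mul_apply, Fin.sum_univ_two, Matrix.diagonal] <;>
      first
        | ring1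
        | linear_combination t * hΔ2
  set a : ℝ := Real.exp (-μ * t) with ha
  set b : ℝ := Real.exp (Δ * t) with hb
  have hbne : b ≠ 0 := Real.exp_ne_zero _
  have hane : a ≠ 0 := Real.exp_ne_zero _
  have hexpD : NormedSpace.exp D = Matrix.diagonal ![a * b⁻¹, a * b] := by
    have hv : NormedSpace.exp (![-t * (μ + Δ), -t * (μ - Δ)] : Fin 2 → ℝ)
        = ![a * b⁻¹, a * b] := by
      rw [Pi.exp_def]
      funext i
      fin_cases i
      · show NormedSpace.exp (-t * (μ + Δ)) = a * b⁻¹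
        rw [← Real.exp_eq_exp_ℝ, ha, hb, ← Real.exp_neg, ← Real.exp_add]
        congr 1
        ring
      · show NormedSpace.exp (-t * (μ - Δ)) = a * b
        rw [← Real.exp_eq_exp_ℝ, ha, hb, ← Real.exp_add]
        congr 1
        ring
    rw [hD, Matrix.exp_diagonal, hv]
  have hc : Real.cosh (Δ * t) = (b + b⁻¹) / 2 := by
    rw [Real.cosh_eq, hb, Real.exp_neg]
  have hs : Real.sinh (Δ * t) = (b - b⁻¹) / 2 := by
    rw [Real.sinh_eq, hb, Real.exp_neg]
  have main : NormedSpace.exp (-t • H)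
      = a • (Real.cosh (Δ * t) • (1 : Matrix (Fin 2) (Fin 2) ℝ)
          - (Real.sinh (Δ * t) / Δ) • (H - μ • (1 : Matrix (Fin 2) (Fin 2) ℝ))) := by
    rw [key, Matrix.exp_conj P D ((Matrix.isUnit_iff_isUnit_det P).2 hPu), hexpD,
      Matrix.mul_inv_eq_iff_eq_mul_of_invertible]
    ext i j
    fin_cases i <;> fin_cases j <;>
      simp [hP, hH, hc, hs, Matrix.mul_apply, Fin.sum_univ_two, Matrix.diagonal,
        Matrix.one_apply] <;>
      simp only [hμ] <;>
      field_simp <;>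
      first
        | ring1
        | linear_combination (a * b) * hΔ2
        | linear_combination (-(a * b)) * hΔ2
        | linear_combination (2 * a * b) * hΔ2
        | linear_combination (-(2 * a * b)) * hΔ2
        | linear_combination (4 * a * b) * hΔ2
        | linear_combination (-(4 * a * b)) * hΔ2
        | linear_combination (32 * Δ * a * (b ^ 5 - b ^ 3)) * hΔ2
        | linear_combination (32 * Δ * a * (b ^ 4 - b ^ 2)) * hΔ2
        | linear_combination (4 * (b ^ 2 - 1)) * hΔ2
  refine ⟨main, ?_, ?_⟩ <;> rw [main] <;>
    simp [-mul_eq_mul_left_iff, hH, Matrix.one_apply, hμ] <;>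
    field_simp <;> ring
end

section
/- Fix w > 0 and t ∈ (0,1], and for E : ℝ let H_E = !![E + w, -w; -w, w]. Then, as E → ∞ along atTop: (i) the function E ↦ (exp(-t•H_E))₁₀ - (w/E)·e^{-wt} is O(E⁻²); and (ii) the function E ↦ (exp(-t•H_E))₀₀ is O(E⁻²). That is, the probability that the substochastic process starting at the parent x is at the child y at time t equals (w/E)e^{-wt} + O(1/E²), and the probability it remains at x is O(1/E²). -/
open Matrix Asymptotics Filter

set_option maxHeartbeats 1000000

noncomputable def sg (w E : ℝ) : ℝ := Real.sqrt (E^2 + 4*w^2)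

lemma exp_conj2 (P Q A : Matrix (Fin 2) (Fin 2) ℝ) (h1 : P * Q = 1) (h2 : Q * P = 1) :
    NormedSpace.exp (P * A * Q) = P * NormedSpace.exp A * Q :=
  Matrix.exp_units_conj (⟨P, Q, h1, h2⟩ : (Matrix (Fin 2) (Fin 2) ℝ)ˣ) A

lemma diag_fin_two (a b : ℝ) :
    Matrix.diagonal ![a, b] = !![a, 0; 0, b] := by
  ext i j
  fin_cases i <;> fin_cases j <;> simp [Matrix.diagonal]

lemma exp_formula (w t E : ℝ) (hw : 0 < w) (hE : 0 < E) :
    NormedSpace.exp ((-t) • (!![E + w, -w; -w, w] : Matrix (Fin 2) (Fin 2) ℝ)) =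
      !![(Real.exp (-(t*((E+2*w+sg w E)/2)))*((E+sg w E)/2)
           - Real.exp (-(t*((E+2*w-sg w E)/2)))*((E-sg w E)/2))/sg w E,
         w*(Real.exp (-(t*((E+2*w-sg w E)/2))) - Real.exp (-(t*((E+2*w+sg w E)/2))))/sg w E;
         w*(Real.exp (-(t*((E+2*w-sg w E)/2))) - Real.exp (-(t*((E+2*w+sg w E)/2))))/sg w E,
         (((E+sg w E)/2)*Real.exp (-(t*((E+2*w-sg w E)/2)))
           - ((E-sg w E)/2)*Real.exp (-(t*((E+2*w+sg w E)/2))))/sg w E] := by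
  have h4 : (0:ℝ) < E^2 + 4*w^2 := by positivity
  have hs2' : sg w E ^ 2 = E^2 + 4*w^2 := Real.sq_sqrt h4.le
  have hs0' : 0 < sg w E := Real.sqrt_pos.2 h4
  set σ := sg w E with hσ
  clear_value σ
  have hs2 : σ ^ 2 = E^2 + 4*w^2 := hs2'
  have hs0 : 0 < σ := hs0'
  clear hs2' hs0' hσ
  have hσne : σ ≠ 0 := hs0.ne'
  have hwne : w ≠ 0 := hw.ne'
  set P : Matrix (Fin 2) (Fin 2) ℝ := !![w, w; (E+σ)/2, (E-σ)/2] with hP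
  set Q : Matrix (Fin 2) (Fin 2) ℝ := (-(w*σ))⁻¹ • !![(E-σ)/2, -w; -((E+σ)/2), w] with hQ
  clear_value P Q
  have hPQ : P * Q = 1 := by
    ext i j
    fin_cases i <;> fin_cases j <;>
      simp [hP, hQ, Matrix.mul_apply, Fin.sum_univ_two]
    all_goals field_simp
    all_goals first
      | ring1
      | linear_combination hs2
      | linear_combination -hs2
      | linear_combination w*hs2
      | linear_combination (-w)*hs2
  have hQP : Q * P = 1 := by
    ext i j
    fin_cases i <;> fin_cases j <;>
      simp [hP, hQ, Matrix.mul_apply, Fin.sum_univ_two]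
    all_goals field_simp
    all_goals first
      | ring1
      | linear_combination hs2
      | linear_combination -hs2
      | linear_combination w*hs2
      | linear_combination (-w)*hs2
  set D : Matrix (Fin 2) (Fin 2) ℝ := !![(E+2*w-σ)/2, 0; 0, (E+2*w+σ)/2] with hD
  clear_value D
  have hHP : (!![E + w, -w; -w, w] : Matrix (Fin 2) (Fin 2) ℝ) * P = P * D := by
    ext i j
    fin_cases i <;> fin_cases j <;>
      simp [hP, hD, Matrix.mul_apply, Fin.sum_univ_two]
    all_goals first
      | ring1
      | linear_combination hs2/4
      | linear_combination -hs2/4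
  have hHfac : (!![E + w, -w; -w, w] : Matrix (Fin 2) (Fin 2) ℝ) = P * D * Q := by
    calc (!![E + w, -w; -w, w] : Matrix (Fin 2) (Fin 2) ℝ)
        = (!![E + w, -w; -w, w] * P) * Q := by rw [Matrix.mul_assoc, hPQ, Matrix.mul_one]
      _ = P * D * Q := by rw [hHP]
  have hND : (!![-(t*((E+2*w-σ)/2)), 0; 0, -(t*((E+2*w+σ)/2))] : Matrix (Fin 2) (Fin 2) ℝ)
      = (-t) • D := by
    rw [hD]
    ext i j
    fin_cases i <;> fin_cases j <;> simp <;> ring1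
  have hH : (-t) • (!![E + w, -w; -w, w] : Matrix (Fin 2) (Fin 2) ℝ) =
      P * !![-(t*((E+2*w-σ)/2)), 0; 0, -(t*((E+2*w+σ)/2))] * Q := by
    rw [hHfac, hND, Matrix.mul_smul, Matrix.smul_mul]
  have hvec : NormedSpace.exp (![-(t*((E+2*w-σ)/2)), -(t*((E+2*w+σ)/2))] : Fin 2 → ℝ)
      = ![Real.exp (-(t*((E+2*w-σ)/2))), Real.exp (-(t*((E+2*w+σ)/2)))] := by
    funext i
    rw [Pi.coe_exp, ← Real.exp_eq_exp_ℝ]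
    fin_cases i <;> simp
  have hexp : NormedSpace.exp
        (!![-(t*((E+2*w-σ)/2)), 0; 0, -(t*((E+2*w+σ)/2))] : Matrix (Fin 2) (Fin 2) ℝ)
      = !![Real.exp (-(t*((E+2*w-σ)/2))), 0; 0, Real.exp (-(t*((E+2*w+σ)/2)))] := by
    rw [← diag_fin_two, Matrix.exp_diagonal, hvec, diag_fin_two]
  rw [hH, exp_conj2 P Q _ hPQ hQP, hexp]
  set A := Real.exp (-(t*((E+2*w-σ)/2))) with hA
  set B := Real.exp (-(t*((E+2*w+σ)/2))) with hB
  clear_value A B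
  ext i j
  fin_cases i <;> fin_cases j <;>
    simp [hP, hQ, Matrix.mul_apply, Fin.sum_univ_two]
  all_goals field_simp
  all_goals first
    | ring1
    | linear_combination (4*w*σ^2*(A-B)) * hs2
    | linear_combination (-(4*w*σ^2*(A-B))) * hs2
    | linear_combination (w*σ*(A-B)) * hs2
    | linear_combination (-(w*σ*(A-B))) * hs2
    | linear_combination (w*(A-B)) * hs2
    | linear_combination (-(w*(A-B))) * hs2
    | linear_combination (A-B) * hs2

lemma exp_decay (t : ℝ) (ht : 0 < t) :
    (fun E : ℝ => Real.exp (-(t * E))) =O[atTop] fun E : ℝ => (E ^ 2)⁻¹ := by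
  have h1 : Tendsto (fun E : ℝ => t * E) atTop atTop :=
    Tendsto.const_mul_atTop ht tendsto_id
  have h2 : Tendsto (fun E : ℝ => (t*E)^2 * Real.exp (-(t*E))) atTop (nhds 0) := by
    have := (Real.tendsto_pow_mul_exp_neg_atTop_nhds_zero 2).comp h1
    simpa [Function.comp_def] using this
  have h3 : (fun E : ℝ => (t*E)^2 * Real.exp (-(t*E))) =O[atTop] (fun _ => (1:ℝ)) :=
    h2.isBigO_one ℝ
  have h4 : (fun E : ℝ => E^2 * Real.exp (-(t*E))) =O[atTop] (fun _ => (1:ℝ)) := by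
    have he : (fun E : ℝ => E^2 * Real.exp (-(t*E)))
        = fun E : ℝ => (t^2)⁻¹ * ((t*E)^2 * Real.exp (-(t*E))) := by
      funext E
      field_simp
    rw [he]
    exact h3.const_mul_left _
  have h5 := h4.mul (isBigO_refl (fun E : ℝ => (E^2)⁻¹) atTop)
  refine h5.congr' ?_ ?_
  · filter_upwards [eventually_ne_atTop (0:ℝ)] with E hE
    field_simp
  · filter_upwards with E
    simp

lemma exp_sub_exp_le (a b : ℝ) (hba : b ≤ a) (ha : a ≤ 0) :
    Real.exp a - Real.exp b ≤ a - b := by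
  have hea1 : Real.exp a ≤ 1 := by
    calc Real.exp a ≤ Real.exp 0 := Real.exp_le_exp.2 ha
    _ = 1 := Real.exp_zero
  have h1 : (b - a + 1) * Real.exp a ≤ Real.exp (b-a) * Real.exp a :=
    mul_le_mul_of_nonneg_right (Real.add_one_le_exp _) (Real.exp_pos a).le
  rw [← Real.exp_add] at h1
  rw [show b - a + a = b by ring] at h1
  nlinarith [mul_nonneg (sub_nonneg.2 hba) (sub_nonneg.2 hea1), Real.exp_pos a]

/-- Single-child case of Lemma 2: as `E → ∞`, the substochastic process started at the
parent is at the child at time `t` with probability `(w/E)·e^{-wt} + O(1/E²)`, and remains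
at the parent with probability `O(1/E²)`. -/
theorem ssmc_single_child_asymptotics (w t : ℝ) (hw : 0 < w) (ht : 0 < t) (ht1 : t ≤ 1) :
    letI H : ℝ → Matrix (Fin 2) (Fin 2) ℝ := fun E => !![E + w, -w; -w, w]
    ((fun E : ℝ => (NormedSpace.exp (-t • H E)) 1 0 - w / E * Real.exp (-w * t))
        =O[atTop] fun E : ℝ => (E ^ 2)⁻¹) ∧
      ((fun E : ℝ => (NormedSpace.exp (-t • H E)) 0 0)
        =O[atTop] fun E : ℝ => (E ^ 2)⁻¹) := by
  refine ⟨?_, ?_⟩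
  · -- part (i)
    have hg2 : (fun E : ℝ => w * Real.exp (-(t*((E+2*w+sg w E)/2))) / sg w E)
        =O[atTop] fun E : ℝ => (E ^ 2)⁻¹ := by
      refine (IsBigO.of_bound w ?_).trans (exp_decay t ht)
      filter_upwards [eventually_ge_atTop (1:ℝ)] with E hE1
      have hE : (0:ℝ) < E := lt_of_lt_of_le one_pos hE1
      have h4 : (0:ℝ) < E^2 + 4*w^2 := by positivity
      have hs2 : sg w E ^ 2 = E^2 + 4*w^2 := Real.sq_sqrt h4.le
      have hs0 : 0 < sg w E := Real.sqrt_pos.2 h4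
      set σ := sg w E with hσdef
      clear_value σ
      have hσE : E ≤ σ := by nlinarith [mul_pos hw hw]
      have hB : Real.exp (-(t*((E+2*w+σ)/2))) ≤ Real.exp (-(t*E)) := by
        apply Real.exp_le_exp.2
        nlinarith [mul_nonneg ht.le (by linarith : (0:ℝ) ≤ σ + 2*w - E)]
      have hB0 : (0:ℝ) < Real.exp (-(t*((E+2*w+σ)/2))) := Real.exp_pos _
      rw [Real.norm_eq_abs, Real.norm_eq_abs,
        abs_of_nonneg (by positivity : (0:ℝ) ≤ w * Real.exp (-(t*((E+2*w+σ)/2))) / σ),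
        abs_of_pos (Real.exp_pos _)]
      have hσ1 : (1:ℝ) ≤ σ := le_trans hE1 hσE
      calc w * Real.exp (-(t*((E+2*w+σ)/2))) / σ
          ≤ w * Real.exp (-(t*((E+2*w+σ)/2))) := by
            apply div_le_self (by positivity) hσ1
        _ ≤ w * Real.exp (-(t*E)) := by nlinarith
    have hg1 : (fun E : ℝ => w * Real.exp (-(t*((E+2*w-sg w E)/2))) / sg w E
          - w / E * Real.exp (-w * t))
        =O[atTop] fun E : ℝ => (E ^ 2)⁻¹ := by
      refine IsBigO.of_bound (3*w^3) ?_
      filter_upwards [eventually_ge_atTop (1:ℝ)] with E hE1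
      have hE : (0:ℝ) < E := lt_of_lt_of_le one_pos hE1
      have h4 : (0:ℝ) < E^2 + 4*w^2 := by positivity
      have hs2 : sg w E ^ 2 = E^2 + 4*w^2 := Real.sq_sqrt h4.le
      have hs0 : 0 < sg w E := Real.sqrt_pos.2 h4
      set σ := sg w E with hσdef
      clear_value σ
      have hσE : E ≤ σ := by nlinarith [mul_pos hw hw]
      have hσub : σ ≤ E + 2*w := by nlinarith [mul_pos hE hw]
      have hgapE : (σ - E) * E ≤ 2*w^2 := by nlinarith [sq_nonneg (σ - E)]
      have ha_le : -(t*((E+2*w-σ)/2)) ≤ 0 := by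
        have := mul_nonneg ht.le (by linarith : (0:ℝ) ≤ (E+2*w-σ)/2)
        linarith
      have hb_le_a : -w*t ≤ -(t*((E+2*w-σ)/2)) := by
        nlinarith [mul_nonneg ht.le (sub_nonneg.2 hσE)]
      set A := Real.exp (-(t*((E+2*w-σ)/2))) with hAdef
      set ew := Real.exp (-w*t) with hewdef
      have hA_ge : ew ≤ A := Real.exp_le_exp.2 hb_le_a
      have hA1 : A ≤ 1 := by
        have : A ≤ Real.exp 0 := Real.exp_le_exp.2 ha_le
        simpa using this
      have hew0 : (0:ℝ) < ew := Real.exp_pos _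
      have hew1 : ew ≤ 1 := by
        have : ew ≤ Real.exp 0 := Real.exp_le_exp.2 (by nlinarith : -w*t ≤ 0)
        simpa using this
      have hdiff : A - ew ≤ (σ - E)/2 := by
        have h := exp_sub_exp_le _ _ hb_le_a ha_le
        rw [← hAdef, ← hewdef] at h
        nlinarith [mul_nonneg (sub_nonneg.2 ht1) (sub_nonneg.2 hσE)]
      clear_value A ew
      have hA0 : (0:ℝ) < A := lt_of_lt_of_le hew0 hA_ge
      have h1 : E*(A - ew) ≤ w^2 := by
        have hh := mul_le_mul_of_nonneg_left hdiff hE.le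
        nlinarith [hgapE]
      have h2 : (σ - E) * ew ≤ 2*w^2 := by
        nlinarith [mul_nonneg (sub_nonneg.2 hσE) (sub_nonneg.2 hew1),
          mul_nonneg (sub_nonneg.2 hσE) (sub_nonneg.2 hE1)]
      have hid : A*E - σ*ew = E*(A - ew) - (σ - E)*ew := by ring
      have habs : |A*E - σ*ew| ≤ 3*w^2 := by
        rw [abs_le]
        constructor
        · nlinarith [mul_nonneg (sub_nonneg.2 hA_ge) hE.le,
            mul_nonneg (sub_nonneg.2 hσE) hew0.le]
        · nlinarith [mul_nonneg (sub_nonneg.2 hA_ge) hE.le,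
            mul_nonneg (sub_nonneg.2 hσE) hew0.le]
      have hrepr : w*A/σ - w/E*ew = w*(A*E - σ*ew)/(σ*E) := by
        field_simp
      rw [Real.norm_eq_abs, Real.norm_eq_abs, hrepr, abs_div,
        abs_of_pos (mul_pos hs0 hE), abs_mul, abs_of_pos hw,
        abs_of_pos (by positivity : (0:ℝ) < (E^2)⁻¹)]
      calc w * |A*E - σ*ew| / (σ*E) ≤ w * (3*w^2) / (σ*E) := by
            gcongr
        _ ≤ w * (3*w^2) / (E*E) := by
            gcongr
        _ = 3*w^3 * (E^2)⁻¹ := by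
            field_simp
    have heq : (fun E : ℝ => (NormedSpace.exp
            ((-t) • (!![E + w, -w; -w, w] : Matrix (Fin 2) (Fin 2) ℝ))) 1 0
          - w / E * Real.exp (-w * t))
        =ᶠ[atTop] fun E : ℝ =>
          (w * Real.exp (-(t*((E+2*w-sg w E)/2))) / sg w E - w / E * Real.exp (-w * t))
          - w * Real.exp (-(t*((E+2*w+sg w E)/2))) / sg w E := by
      filter_upwards [eventually_gt_atTop (0:ℝ)] with E hE
      rw [exp_formula w t E hw hE]
      simp [Matrix.cons_val_one, Matrix.head_cons, Matrix.cons_val_zero]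
      ring
    exact (hg1.sub hg2).congr' heq.symm EventuallyEq.rfl
  · -- part (ii)
    have hO : (fun E : ℝ => Real.exp (-(t*E)) + w^2 * (E^2)⁻¹)
        =O[atTop] fun E : ℝ => (E ^ 2)⁻¹ :=
      (exp_decay t ht).add ((isBigO_refl (fun E : ℝ => (E^2)⁻¹) atTop).const_mul_left (w^2))
    refine (IsBigO.of_bound 1 ?_).trans hO
    filter_upwards [eventually_ge_atTop (1:ℝ)] with E hE1
    have hE : (0:ℝ) < E := lt_of_lt_of_le one_pos hE1
    rw [exp_formula w t E hw hE]
    have h4 : (0:ℝ) < E^2 + 4*w^2 := by positivity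
    have hs2 : sg w E ^ 2 = E^2 + 4*w^2 := Real.sq_sqrt h4.le
    have hs0 : 0 < sg w E := Real.sqrt_pos.2 h4
    show ‖(Real.exp (-(t*((E+2*w+sg w E)/2)))*((E+sg w E)/2)
        - Real.exp (-(t*((E+2*w-sg w E)/2)))*((E-sg w E)/2))/sg w E‖
        ≤ 1 * ‖Real.exp (-(t*E)) + w^2 * (E^2)⁻¹‖
    set σ := sg w E with hσdef
    clear_value σ
    have hσE : E ≤ σ := by nlinarith [mul_pos hw hw]
    have hσub : σ ≤ E + 2*w := by nlinarith [mul_pos hE hw]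
    have hgapE : (σ - E) * E ≤ 2*w^2 := by nlinarith [sq_nonneg (σ - E)]
    set A := Real.exp (-(t*((E+2*w-σ)/2))) with hAdef
    set B := Real.exp (-(t*((E+2*w+σ)/2))) with hBdef
    have hBexp : B ≤ Real.exp (-(t*E)) := by
      rw [hBdef]
      apply Real.exp_le_exp.2
      nlinarith [mul_nonneg ht.le (by linarith : (0:ℝ) ≤ σ + 2*w - E)]
    have hA1 : A ≤ 1 := by
      rw [hAdef]
      have : Real.exp (-(t*((E+2*w-σ)/2))) ≤ Real.exp 0 := by
        apply Real.exp_le_exp.2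
        have := mul_nonneg ht.le (by linarith : (0:ℝ) ≤ (E+2*w-σ)/2)
        linarith
      simpa using this
    have hA0 : (0:ℝ) < A := hAdef ▸ Real.exp_pos _
    have hB0 : (0:ℝ) < B := hBdef ▸ Real.exp_pos _
    clear_value A B
    have hexpP : (0:ℝ) < Real.exp (-(t*E)) := Real.exp_pos _
    rw [one_mul, Real.norm_eq_abs, Real.norm_eq_abs,
      abs_of_pos (by positivity : (0:ℝ) < Real.exp (-(t*E)) + w^2 * (E^2)⁻¹)]
    rw [abs_div, abs_of_pos hs0, div_le_iff₀ hs0]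
    have hstep2 : B*((E+σ)/2) ≤ Real.exp (-(t*E)) * σ := by
      nlinarith [mul_nonneg (sub_nonneg.2 hBexp) (by positivity : (0:ℝ) ≤ (E+σ)/2),
        mul_nonneg hexpP.le (by linarith : (0:ℝ) ≤ σ - (E+σ)/2)]
    have hstep : A*((σ-E)/2) ≤ w^2*(E^2)⁻¹*σ := by
      have h1 : A*((σ-E)/2) ≤ (σ-E)/2 := by
        nlinarith [mul_nonneg (sub_nonneg.2 hA1) (by linarith : (0:ℝ) ≤ (σ-E)/2)]
      have h2 : (σ-E)/2 ≤ w^2/E := by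
        rw [div_le_div_iff₀ two_pos hE]
        nlinarith
      have h3 : w^2/E ≤ w^2*(E^2)⁻¹*σ := by
        rw [show w^2*(E^2)⁻¹*σ = w^2*σ/E^2 from by ring, div_le_div_iff₀ hE (by positivity)]
        nlinarith [mul_nonneg (mul_nonneg (sq_nonneg w) hE.le) (sub_nonneg.2 hσE)]
      linarith
    have habs2 : |B*((E+σ)/2) - A*((E-σ)/2)| ≤ B*((E+σ)/2) + A*((σ-E)/2) := by
      rw [abs_le]
      constructor
      · nlinarith [mul_nonneg hB0.le (by linarith : (0:ℝ) ≤ (E+σ)/2),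
          mul_nonneg hA0.le (by linarith : (0:ℝ) ≤ (σ-E)/2)]
      · nlinarith [mul_nonneg hB0.le (by linarith : (0:ℝ) ≤ (E+σ)/2),
          mul_nonneg hA0.le (by linarith : (0:ℝ) ≤ (σ-E)/2)]
    nlinarith [habs2, hstep, hstep2]
end

section
/- Fix d ≥ 1 and edge weights w_1, …, w_d > 0, and for E : ℝ let H_E be the (d+1)×(d+1) real matrix (indices 0,…,d) with (H_E)₀₀ = E + ∑_{j=1}^d w_j, (H_E)₀ⱼ = (H_E)ⱼ₀ = -w_j and (H_E)ⱼⱼ = w_j for 1 ≤ j ≤ d, and all other entries 0. Then, as E → ∞ along atTop: (i) for each j ∈ {1,…,d}, the function E ↦ (exp(-H_E))ⱼ₀ - (w_j/E)·e^{-w_j} is O(E⁻²); and (ii) the function E ↦ (exp(-H_E))₀₀ is O(E⁻²). That is, after unit time the probability of having moved from the parent x to its j-th child is (w_j/E)e^{-w_j} + O(1/E²) — independent of the number of children — and the probability of remaining at x is O(1/E²). -/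
open Matrix Asymptotics Filter NormedSpace

/-- The SSMC generator for a parent node (index `0`, with death rate `E`) connected to
`d` children (indices `1,…,d`) by edges of weights `w 0, …, w (d-1)`:
the star-graph Laplacian plus the diagonal objective. -/
noncomputable def ssmcStar (d : ℕ) (w : Fin d → ℝ) (E : ℝ) :
    Matrix (Fin (d + 1)) (Fin (d + 1)) ℝ :=
  Matrix.of fun y x =>
    Fin.cases
      (Fin.cases (E + ∑ j, w j) (fun j => -w j) x)
      (fun i => Fin.cases (-w i) (fun j => if i = j then w i else 0) x)
      y

lemma matrixExp_entry_hasDerivAt {n : ℕ} (A : Matrix (Fin n) (Fin n) ℝ) (i j : Fin n) (t : ℝ) :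
    HasDerivAt (fun t : ℝ => NormedSpace.exp (t • A) i j) ((A * NormedSpace.exp (t • A)) i j) t := by
  letI : SeminormedRing (Matrix (Fin n) (Fin n) ℝ) := Matrix.linftyOpSemiNormedRing
  letI : NormedRing (Matrix (Fin n) (Fin n) ℝ) := Matrix.linftyOpNormedRing
  letI : NormedAlgebra ℝ (Matrix (Fin n) (Fin n) ℝ) := Matrix.linftyOpNormedAlgebra
  have h := hasDerivAt_exp_smul_const' (𝕂 := ℝ) A t
  let L : Matrix (Fin n) (Fin n) ℝ →ₗ[ℝ] ℝ :=
    (LinearMap.proj j).comp (LinearMap.proj (R := ℝ) (φ := fun _ : Fin n => Fin n → ℝ) i)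
  have hL : Continuous L := LinearMap.continuous_of_finiteDimensional L
  exact (ContinuousLinearMap.hasFDerivAt ⟨L, hL⟩).comp_hasDerivAt t h

section aux
variable {d : ℕ} (w : Fin d → ℝ) (E : ℝ)

noncomputable def AM : Matrix (Fin (d+1)) (Fin (d+1)) ℝ := -(ssmcStar d w E)

lemma AM_zero_zero : AM w E 0 0 = -(E + ∑ j, w j) := by simp [AM, ssmcStar]
lemma AM_zero_succ (j : Fin d) : AM w E 0 j.succ = w j := by simp [AM, ssmcStar]
lemma AM_succ_zero (j : Fin d) : AM w E j.succ 0 = w j := by simp [AM, ssmcStar]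
lemma AM_succ_succ (i k : Fin d) : AM w E i.succ k.succ = -(if i = k then w i else 0) := by
  simp [AM, ssmcStar]

noncomputable def fP (t : ℝ) : ℝ := NormedSpace.exp (t • AM w E) 0 0
noncomputable def gP (j : Fin d) (t : ℝ) : ℝ := NormedSpace.exp (t • AM w E) j.succ 0

lemma fP_hasDerivAt (t : ℝ) :
    HasDerivAt (fP w E)
      (-(E + ∑ j, w j) * fP w E t + ∑ j, w j * gP w E j t) t := by
  have h := matrixExp_entry_hasDerivAt (AM w E) 0 0 t
  convert h using 1
  · rfl
  rw [Matrix.mul_apply, Fin.sum_univ_succ, AM_zero_zero]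
  simp only [AM_zero_succ]
  rfl

lemma gP_hasDerivAt (j : Fin d) (t : ℝ) :
    HasDerivAt (gP w E j) (w j * fP w E t - w j * gP w E j t) t := by
  have h := matrixExp_entry_hasDerivAt (AM w E) j.succ 0 t
  convert h using 1
  · rfl
  rw [Matrix.mul_apply, Fin.sum_univ_succ, AM_succ_zero]
  simp only [AM_succ_succ, neg_mul, ite_mul, zero_mul, Finset.sum_neg_distrib]
  rw [Finset.sum_ite_eq]
  simp [sub_eq_add_neg]
  rfl

lemma fP_cont : Continuous (fP w E) :=
  continuous_iff_continuousAt.mpr fun t => (fP_hasDerivAt w E t).continuousAt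

lemma gP_cont (j : Fin d) : Continuous (gP w E j) :=
  continuous_iff_continuousAt.mpr fun t => (gP_hasDerivAt w E j t).continuousAt

lemma fP_zero : fP w E 0 = 1 := by
  simp [fP, Matrix.one_apply_eq]

lemma gP_zero (j : Fin d) : gP w E j 0 = 0 := by
  simp [gP]

end aux

-- helper: exact integral of exp(c*s)
lemma integ_exp_mul (c : ℝ) (hc : c ≠ 0) (t : ℝ) :
    ∫ s in (0:ℝ)..t, Real.exp (c * s) = (Real.exp (c * t) - 1) / c := by
  have key : ∀ u : ℝ, HasDerivAt (fun s : ℝ => Real.exp (c * s) / c) (Real.exp (c * u)) u := by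
    intro u
    have h : HasDerivAt (fun s : ℝ => c * s) c u := by
      simpa using (hasDerivAt_id u).const_mul c
    have := (h.exp).div_const c
    simpa [mul_comm, mul_div_assoc, mul_div_cancel_left₀ _ hc] using this
  rw [intervalIntegral.integral_eq_sub_of_hasDerivAt (fun s _ => key s)
    ((Real.continuous_exp.comp (continuous_const.mul continuous_id)).intervalIntegrable 0 t)]
  simp [sub_div]

lemma abs_integ_le {t : ℝ} (ht : 0 ≤ t) {u v : ℝ → ℝ} (hu : Continuous u) (hv : Continuous v)
    (h : ∀ s ∈ Set.Icc (0:ℝ) t, |u s| ≤ v s) :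
    |∫ s in (0:ℝ)..t, u s| ≤ ∫ s in (0:ℝ)..t, v s := by
  calc |∫ s in (0:ℝ)..t, u s| ≤ ∫ s in (0:ℝ)..t, |u s| :=
        intervalIntegral.abs_integral_le_integral_abs ht
    _ ≤ ∫ s in (0:ℝ)..t, v s := by
        apply intervalIntegral.integral_mono_on ht (hu.abs.intervalIntegrable 0 t)
          (hv.intervalIntegrable 0 t) h

section integeq
variable {d : ℕ} (w : Fin d → ℝ) (E : ℝ)

lemma gP_eq (j : Fin d) (t : ℝ) :
    gP w E j t
      = Real.exp (-(w j * t)) * ∫ s in (0:ℝ)..t, w j * Real.exp (w j * s) * fP w E s := by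
  have key : ∀ u : ℝ, HasDerivAt (fun s => Real.exp (w j * s) * gP w E j s)
      (w j * Real.exp (w j * u) * fP w E u) u := by
    intro u
    have h1 : HasDerivAt (fun s : ℝ => w j * s) (w j) u := by
      simpa using (hasDerivAt_id u).const_mul (w j)
    have := (h1.exp).mul (gP_hasDerivAt w E j u)
    exact this.congr_deriv (by ring)
  have hint : IntervalIntegrable (fun u => w j * Real.exp (w j * u) * fP w E u)
      MeasureTheory.volume 0 t :=
    ((continuous_const.mul (Real.continuous_exp.comp (continuous_const.mul continuous_id))).mul
      (fP_cont w E)).intervalIntegrable 0 t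
  have hFTC := intervalIntegral.integral_eq_sub_of_hasDerivAt (fun s _ => key s) hint
  rw [hFTC, gP_zero, Real.exp_neg]
  field_simp
  ring

lemma fP_eq (t : ℝ) :
    fP w E t = Real.exp (-((E + ∑ j, w j) * t)) *
      (1 + ∫ s in (0:ℝ)..t, Real.exp ((E + ∑ j, w j) * s) * (∑ j, w j * gP w E j s)) := by
  set c := E + ∑ j, w j with hc
  have key : ∀ u : ℝ, HasDerivAt (fun s => Real.exp (c * s) * fP w E s)
      (Real.exp (c * u) * (∑ j, w j * gP w E j u)) u := by
    intro u
    have h1 : HasDerivAt (fun s : ℝ => c * s) c u := by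
      simpa using (hasDerivAt_id u).const_mul c
    have := (h1.exp).mul (fP_hasDerivAt w E u)
    exact this.congr_deriv (by rw [← hc]; ring)
  have hint : IntervalIntegrable (fun u => Real.exp (c * u) * (∑ j, w j * gP w E j u))
      MeasureTheory.volume 0 t := by
    apply Continuous.intervalIntegrable
    exact (Real.continuous_exp.comp (continuous_const.mul continuous_id)).mul
      (continuous_finset_sum _ (fun j _ => continuous_const.mul (gP_cont w E j)))
  have hFTC := intervalIntegral.integral_eq_sub_of_hasDerivAt (fun s _ => key s) hint
  rw [hFTC, fP_zero, Real.exp_neg]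
  field_simp
  rw [mul_zero, Real.exp_zero]
  ring

end integeq

section bounds
variable {d : ℕ} {w : Fin d → ℝ} {E : ℝ}

/-- parametric bound: a uniform bound on `f` transfers to `g j`. -/
lemma gP_le (hw : ∀ j, 0 < w j) (j : Fin d) {M t : ℝ} (hM0 : 0 ≤ M) (ht : t ∈ Set.Icc (0:ℝ) 1)
    (hf : ∀ s ∈ Set.Icc (0:ℝ) 1, |fP w E s| ≤ M) :
    |gP w E j t| ≤ M := by
  have hwj := hw j
  rw [gP_eq]
  have habs : |∫ s in (0:ℝ)..t, w j * Real.exp (w j * s) * fP w E s|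
      ≤ ∫ s in (0:ℝ)..t, (w j * M) * Real.exp (w j * s) := by
    apply abs_integ_le ht.1
    · exact (continuous_const.mul (Real.continuous_exp.comp
        (continuous_const.mul continuous_id))).mul (fP_cont w E)
    · exact continuous_const.mul (Real.continuous_exp.comp (continuous_const.mul continuous_id))
    · intro s hs
      have hfs := hf s ⟨hs.1, hs.2.trans ht.2⟩
      rw [abs_mul, abs_mul, abs_of_pos hwj, abs_of_pos (Real.exp_pos _)]
      calc w j * Real.exp (w j * s) * |fP w E s| ≤ w j * Real.exp (w j * s) * M := by
            apply mul_le_mul_of_nonneg_left hfs (by positivity)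
        _ = w j * M * Real.exp (w j * s) := by ring
  rw [intervalIntegral.integral_const_mul, integ_exp_mul _ (ne_of_gt hwj)] at habs
  have hval : w j * M * ((Real.exp (w j * t) - 1) / w j) = M * (Real.exp (w j * t) - 1) := by
    field_simp
  rw [hval] at habs
  rw [abs_mul, abs_of_pos (Real.exp_pos _)]
  calc Real.exp (-(w j * t)) * |∫ s in (0:ℝ)..t, w j * Real.exp (w j * s) * fP w E s|
      ≤ Real.exp (-(w j * t)) * (M * (Real.exp (w j * t) - 1)) := by
        apply mul_le_mul_of_nonneg_left habs (Real.exp_pos _).le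
    _ = M - M * Real.exp (-(w j * t)) := by
        rw [Real.exp_neg]
        have := (Real.exp_pos (w j * t)).ne'
        field_simp
    _ ≤ M := by
        have : 0 ≤ M * Real.exp (-(w j * t)) := by positivity
        linarith

/-- parametric bound: a pointwise bound on `G = ∑ wⱼ gⱼ` gives `|f t - e^{-ct}| ≤ M/c`. -/
lemma fP_sub_le {M t : ℝ} (hc : 0 < E + ∑ j, w j) (hM : 0 ≤ M) (ht : t ∈ Set.Icc (0:ℝ) 1)
    (hG : ∀ s ∈ Set.Icc (0:ℝ) 1, |∑ j, w j * gP w E j s| ≤ M) :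
    |fP w E t - Real.exp (-((E + ∑ j, w j) * t))| ≤ M / (E + ∑ j, w j) := by
  set c := E + ∑ j, w j with hcdef
  have heq : fP w E t - Real.exp (-(c * t))
      = Real.exp (-(c * t)) * ∫ s in (0:ℝ)..t, Real.exp (c * s) * (∑ j, w j * gP w E j s) := by
    rw [fP_eq]; ring
  have habs : |∫ s in (0:ℝ)..t, Real.exp (c * s) * (∑ j, w j * gP w E j s)|
      ≤ ∫ s in (0:ℝ)..t, M * Real.exp (c * s) := by
    apply abs_integ_le ht.1
    · exact (Real.continuous_exp.comp (continuous_const.mul continuous_id)).mul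
        (continuous_finset_sum _ (fun j _ => continuous_const.mul (gP_cont w E j)))
    · exact continuous_const.mul (Real.continuous_exp.comp (continuous_const.mul continuous_id))
    · intro s hs
      rw [abs_mul, abs_of_pos (Real.exp_pos _)]
      calc Real.exp (c * s) * |∑ j, w j * gP w E j s| ≤ Real.exp (c * s) * M :=
            mul_le_mul_of_nonneg_left (hG s ⟨hs.1, hs.2.trans ht.2⟩) (Real.exp_pos _).le
        _ = M * Real.exp (c * s) := by ring
  rw [intervalIntegral.integral_const_mul, integ_exp_mul _ (ne_of_gt hc)] at habs
  rw [heq, abs_mul, abs_of_pos (Real.exp_pos _)]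
  calc Real.exp (-(c * t)) * |∫ s in (0:ℝ)..t, Real.exp (c * s) * (∑ j, w j * gP w E j s)|
      ≤ Real.exp (-(c * t)) * (M * ((Real.exp (c * t) - 1) / c)) := by
        apply mul_le_mul_of_nonneg_left habs (Real.exp_pos _).le
    _ = M / c - (M / c) * Real.exp (-(c * t)) := by
        rw [Real.exp_neg]
        have := (Real.exp_pos (c * t)).ne'
        field_simp
    _ ≤ M / c := by
        have : 0 ≤ (M / c) * Real.exp (-(c * t)) := by positivity
        linarith

end bounds

section chain
variable {d : ℕ} {w : Fin d → ℝ} {E : ℝ}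

lemma fP_le_two (hw : ∀ j, 0 < w j) (hE : 2 * (∑ j, w j) + 1 ≤ E) :
    ∀ t ∈ Set.Icc (0:ℝ) 1, |fP w E t| ≤ 2 := by
  have hS0 : 0 ≤ ∑ j, w j := Finset.sum_nonneg fun j _ => (hw j).le
  have hc : 0 < E + ∑ j, w j := by linarith
  obtain ⟨t₀, ht₀, hmax⟩ := isCompact_Icc.exists_isMaxOn (Set.nonempty_Icc.mpr zero_le_one)
    ((fP_cont w E).abs.continuousOn)
  set F := |fP w E t₀| with hFdef
  have hF0 : 0 ≤ F := abs_nonneg _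
  have hfb : ∀ s ∈ Set.Icc (0:ℝ) 1, |fP w E s| ≤ F := fun s hs => hmax hs
  have hGb : ∀ s ∈ Set.Icc (0:ℝ) 1, |∑ j, w j * gP w E j s| ≤ (∑ j, w j) * F := by
    intro s hs
    calc |∑ j, w j * gP w E j s| ≤ ∑ j, |w j * gP w E j s| := Finset.abs_sum_le_sum_abs _ _
      _ ≤ ∑ j, w j * F := by
          apply Finset.sum_le_sum; intro j _
          rw [abs_mul, abs_of_pos (hw j)]
          exact mul_le_mul_of_nonneg_left (gP_le hw j hF0 hs hfb) (hw j).le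
      _ = (∑ j, w j) * F := by rw [← Finset.sum_mul]
  have hkey := fP_sub_le hc (by positivity) ht₀ hGb
  have htri : F ≤ |fP w E t₀ - Real.exp (-((E + ∑ j, w j) * t₀))|
      + Real.exp (-((E + ∑ j, w j) * t₀)) := by
    have := abs_add_le (fP w E t₀ - Real.exp (-((E + ∑ j, w j) * t₀)))
      (Real.exp (-((E + ∑ j, w j) * t₀)))
    rw [abs_of_pos (Real.exp_pos _)] at this
    simpa using this
  have hexp1 : Real.exp (-((E + ∑ j, w j) * t₀)) ≤ 1 := by
    calc Real.exp (-((E + ∑ j, w j) * t₀)) ≤ Real.exp 0 := by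
          apply Real.exp_le_exp.mpr; nlinarith [ht₀.1]
      _ = 1 := Real.exp_zero
  have h2 : (∑ j, w j) * F / (E + ∑ j, w j) ≤ F / 2 := by
    rw [div_le_div_iff₀ hc (by norm_num)]
    nlinarith
  have hF2 : F ≤ 2 := by linarith
  exact fun t ht => (hfb t ht).trans hF2

lemma r1_bound (hw : ∀ j, 0 < w j) (hE : 2 * (∑ j, w j) + 1 ≤ E) :
    ∀ t ∈ Set.Icc (0:ℝ) 1,
      |fP w E t - Real.exp (-((E + ∑ j, w j) * t))|
        ≤ 2 * (∑ j, w j) / (E + ∑ j, w j) := by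
  have hS0 : 0 ≤ ∑ j, w j := Finset.sum_nonneg fun j _ => (hw j).le
  have hc : 0 < E + ∑ j, w j := by linarith
  intro t ht
  apply fP_sub_le hc (by positivity) ht
  intro s hs
  calc |∑ j, w j * gP w E j s| ≤ ∑ j, |w j * gP w E j s| := Finset.abs_sum_le_sum_abs _ _
    _ ≤ ∑ j, w j * 2 := by
        apply Finset.sum_le_sum; intro j _
        rw [abs_mul, abs_of_pos (hw j)]
        exact mul_le_mul_of_nonneg_left
          (gP_le hw j (by norm_num) hs (fP_le_two hw hE)) (hw j).le
    _ = 2 * (∑ j, w j) := by rw [← Finset.sum_mul]; ring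

end chain

section fine
variable {d : ℕ} {w : Fin d → ℝ} {E : ℝ}

lemma gP_fine (hw : ∀ j, 0 < w j) (hE : 2 * (∑ j, w j) + 1 ≤ E) (j : Fin d) :
    ∀ t ∈ Set.Icc (0:ℝ) 1,
      |gP w E j t| ≤ w j * Real.exp (w j) * (1 + 2 * (∑ i, w i)) / (E + ∑ i, w i) := by
  have hS0 : 0 ≤ ∑ i, w i := Finset.sum_nonneg fun i _ => (hw i).le
  have hc : 0 < E + ∑ i, w i := by linarith
  have hwj := hw j
  intro t ht
  set c := E + ∑ i, w i with hcdef
  set S := ∑ i, w i with hSdef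
  have hfabs : ∀ s ∈ Set.Icc (0:ℝ) 1, |fP w E s| ≤ Real.exp (-(c * s)) + 2 * S / c := by
    intro s hs
    have h1 := r1_bound hw hE s hs
    have h2 : |fP w E s| ≤ |fP w E s - Real.exp (-(c * s))| + Real.exp (-(c * s)) := by
      have := abs_add_le (fP w E s - Real.exp (-(c * s))) (Real.exp (-(c * s)))
      rw [abs_of_pos (Real.exp_pos _)] at this
      simpa using this
    linarith
  have habs : |∫ s in (0:ℝ)..t, w j * Real.exp (w j * s) * fP w E s|
      ≤ ∫ s in (0:ℝ)..t, (w j * Real.exp (w j)) * (Real.exp (-c * s) + 2 * S / c) := by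
    apply abs_integ_le ht.1
    · exact (continuous_const.mul (Real.continuous_exp.comp
        (continuous_const.mul continuous_id))).mul (fP_cont w E)
    · exact continuous_const.mul ((Real.continuous_exp.comp
        (continuous_const.mul continuous_id)).add continuous_const)
    · intro s hs
      have hs1 : s ∈ Set.Icc (0:ℝ) 1 := ⟨hs.1, hs.2.trans ht.2⟩
      rw [abs_mul, abs_mul, abs_of_pos hwj, abs_of_pos (Real.exp_pos _)]
      have hexps : Real.exp (w j * s) ≤ Real.exp (w j) := by
        apply Real.exp_le_exp.mpr
        nlinarith [hs1.2, hwj]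
      have hnn : 0 ≤ Real.exp (-(c * s)) + 2 * S / c := by positivity
      calc w j * Real.exp (w j * s) * |fP w E s|
          ≤ w j * Real.exp (w j * s) * (Real.exp (-(c * s)) + 2 * S / c) :=
            mul_le_mul_of_nonneg_left (hfabs s hs1) (by positivity)
        _ ≤ w j * Real.exp (w j) * (Real.exp (-(c * s)) + 2 * S / c) := by
            apply mul_le_mul_of_nonneg_right _ hnn
            exact mul_le_mul_of_nonneg_left hexps hwj.le
        _ = w j * Real.exp (w j) * (Real.exp (-c * s) + 2 * S / c) := by rw [neg_mul]
  have hval : ∫ s in (0:ℝ)..t, (w j * Real.exp (w j)) * (Real.exp (-c * s) + 2 * S / c)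
      = (w j * Real.exp (w j)) * ((Real.exp (-c * t) - 1) / (-c) + t * (2 * S / c)) := by
    rw [intervalIntegral.integral_const_mul]
    congr 1
    rw [intervalIntegral.integral_add
      (Continuous.intervalIntegrable (by fun_prop : Continuous fun s : ℝ => Real.exp (-c * s)) 0 t)
      (intervalIntegrable_const)]
    rw [integ_exp_mul (-c) (by linarith) t, intervalIntegral.integral_const]
    simp
  rw [hval] at habs
  have hxpos : 0 < Real.exp (-c * t) := Real.exp_pos _
  have hxle : Real.exp (-c * t) ≤ 1 := by
    calc Real.exp (-c * t) ≤ Real.exp 0 := by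
          apply Real.exp_le_exp.mpr; nlinarith [ht.1]
      _ = 1 := Real.exp_zero
  have hinner : (Real.exp (-c * t) - 1) / (-c) + t * (2 * S / c) ≤ (1 + 2 * S) / c := by
    have e1 : (Real.exp (-c * t) - 1) / (-c) = (1 - Real.exp (-c * t)) / c := by
      rw [div_neg, ← neg_div, neg_sub]
    have A : (1 - Real.exp (-c * t)) / c ≤ 1 / c := by
      gcongr
      linarith
    have hy : 0 ≤ 2 * S / c := by positivity
    have B : t * (2 * S / c) ≤ 2 * S / c := by nlinarith [ht.1, ht.2]
    rw [e1, add_div]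
    linarith
  have hexpw : Real.exp (-(w j * t)) ≤ 1 := by
    calc Real.exp (-(w j * t)) ≤ Real.exp 0 := by
          apply Real.exp_le_exp.mpr; nlinarith [ht.1, hwj]
      _ = 1 := Real.exp_zero
  rw [gP_eq, abs_mul, abs_of_pos (Real.exp_pos _)]
  calc Real.exp (-(w j * t)) * |∫ s in (0:ℝ)..t, w j * Real.exp (w j * s) * fP w E s|
      ≤ 1 * ((w j * Real.exp (w j)) * ((1 + 2 * S) / c)) := by
        apply mul_le_mul hexpw (habs.trans (mul_le_mul_of_nonneg_left hinner (by positivity)))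
          (abs_nonneg _) (by norm_num)
    _ = w j * Real.exp (w j) * (1 + 2 * S) / c := by ring

end fine

noncomputable def Qc {d : ℕ} (w : Fin d → ℝ) : ℝ :=
  ∑ j, w j * (w j * Real.exp (w j) * (1 + 2 * (∑ i, w i)))

section final
variable {d : ℕ} {w : Fin d → ℝ} {E : ℝ}

lemma Qc_nonneg (hw : ∀ j, 0 < w j) : 0 ≤ Qc w := by
  apply Finset.sum_nonneg
  intro j _
  have hS0 : 0 ≤ ∑ i, w i := Finset.sum_nonneg fun i _ => (hw i).le
  have := hw j
  positivity

lemma r2_bound (hw : ∀ j, 0 < w j) (hE : 2 * (∑ j, w j) + 1 ≤ E) :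
    ∀ t ∈ Set.Icc (0:ℝ) 1,
      |fP w E t - Real.exp (-((E + ∑ j, w j) * t))|
        ≤ Qc w / (E + ∑ j, w j) ^ 2 := by
  have hS0 : 0 ≤ ∑ i, w i := Finset.sum_nonneg fun i _ => (hw i).le
  have hc : 0 < E + ∑ i, w i := by linarith
  intro t ht
  have key := fP_sub_le (M := Qc w / (E + ∑ i, w i)) hc
    (div_nonneg (Qc_nonneg hw) hc.le) ht ?_
  · calc |fP w E t - Real.exp (-((E + ∑ j, w j) * t))|
        ≤ Qc w / (E + ∑ i, w i) / (E + ∑ i, w i) := key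
      _ = Qc w / (E + ∑ i, w i) ^ 2 := by rw [div_div, sq]
  · intro s hs
    calc |∑ j, w j * gP w E j s| ≤ ∑ j, |w j * gP w E j s| := Finset.abs_sum_le_sum_abs _ _
      _ ≤ ∑ j, w j * (w j * Real.exp (w j) * (1 + 2 * (∑ i, w i)) / (E + ∑ i, w i)) := by
          apply Finset.sum_le_sum; intro j _
          rw [abs_mul, abs_of_pos (hw j)]
          exact mul_le_mul_of_nonneg_left (gP_fine hw hE j s hs) (hw j).le
      _ = Qc w / (E + ∑ i, w i) := by
          rw [Qc, Finset.sum_div]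
          apply Finset.sum_congr rfl
          intro j _
          ring

lemma exp_neg_le_four_div_sq {x : ℝ} (hx : 1 ≤ x) : Real.exp (-x) ≤ 4 / x ^ 2 := by
  have h := Real.add_one_le_exp (x / 2)
  have hsq : Real.exp x = Real.exp (x / 2) ^ 2 := by
    rw [sq, ← Real.exp_add]
    norm_num
  have hlow : x ^ 2 / 4 ≤ Real.exp x := by nlinarith
  rw [Real.exp_neg]
  have h4 : (4:ℝ) / x ^ 2 = (x ^ 2 / 4)⁻¹ := by
    rw [inv_div]
  rw [h4]
  apply inv_anti₀ (by positivity) hlow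
end final

section endgame
variable {d : ℕ} {w : Fin d → ℝ} {E : ℝ}

lemma final_f (hw : ∀ j, 0 < w j) (hE : 2 * (∑ j, w j) + 1 ≤ E) :
    |fP w E 1| ≤ (4 + Qc w) / E ^ 2 := by
  have hS0 : 0 ≤ ∑ i, w i := Finset.sum_nonneg fun i _ => (hw i).le
  have hE1 : 1 ≤ E := by linarith
  have hc : 0 < E + ∑ i, w i := by linarith
  have h1 := r2_bound hw hE 1 ⟨zero_le_one, le_refl 1⟩
  have htri : |fP w E 1| ≤ |fP w E 1 - Real.exp (-((E + ∑ j, w j) * 1))|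
      + Real.exp (-((E + ∑ j, w j) * 1)) := by
    have := abs_add_le (fP w E 1 - Real.exp (-((E + ∑ j, w j) * 1)))
      (Real.exp (-((E + ∑ j, w j) * 1)))
    rw [abs_of_pos (Real.exp_pos _)] at this
    simpa using this
  have h2 : Qc w / (E + ∑ j, w j) ^ 2 ≤ Qc w / E ^ 2 := by
    gcongr
    · exact Qc_nonneg hw
    · linarith
  have h3 : Real.exp (-((E + ∑ j, w j) * 1)) ≤ 4 / E ^ 2 := by
    calc Real.exp (-((E + ∑ j, w j) * 1)) ≤ Real.exp (-E) := by
          apply Real.exp_le_exp.mpr; nlinarith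
      _ ≤ 4 / E ^ 2 := exp_neg_le_four_div_sq hE1
  have h4 : (4 + Qc w) / E ^ 2 = 4 / E ^ 2 + Qc w / E ^ 2 := by rw [add_div]
  linarith

lemma final_g (hw : ∀ j, 0 < w j) (hE : 2 * (∑ j, w j) + 1 ≤ E) (j : Fin d) :
    |gP w E j 1 - w j / E * Real.exp (-w j)|
      ≤ (w j * ((∑ i, w i) + 4) + w j * Real.exp (w j) * Qc w) / E ^ 2 := by
  have hS0 : 0 ≤ ∑ i, w i := Finset.sum_nonneg fun i _ => (hw i).le
  have hwj := hw j
  have hwjS : w j ≤ ∑ i, w i := Finset.single_le_sum (fun i _ => (hw i).le) (Finset.mem_univ j)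
  have hE1 : 1 ≤ E := by linarith
  have hE0 : 0 < E := by linarith
  have hc : 0 < E + ∑ i, w i := by linarith
  set S := ∑ i, w i with hSdef
  set c := E + S with hcdef
  set a := c - w j with hadef
  have ha0 : 0 < a := by rw [hadef, hcdef]; linarith
  have ha1 : 1 ≤ a := by rw [hadef, hcdef]; linarith
  have haE : E ≤ a := by rw [hadef, hcdef]; linarith
  -- split the integral
  have hcont_r : Continuous (fun s : ℝ => w j * Real.exp (w j * s)
      * (fP w E s - Real.exp (-(c * s)))) :=
    (continuous_const.mul (Real.continuous_exp.comp (continuous_const.mul continuous_id))).mul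
      ((fP_cont w E).sub (Real.continuous_exp.comp (continuous_const.mul continuous_id).neg))
  have hcont_e : Continuous (fun s : ℝ => w j * Real.exp ((w j - c) * s)) := by fun_prop
  have hsplit : (∫ s in (0:ℝ)..1, w j * Real.exp (w j * s) * fP w E s)
      = (∫ s in (0:ℝ)..1, w j * Real.exp ((w j - c) * s))
        + ∫ s in (0:ℝ)..1, w j * Real.exp (w j * s) * (fP w E s - Real.exp (-(c * s))) := by
    rw [← intervalIntegral.integral_add (hcont_e.intervalIntegrable 0 1)
      (hcont_r.intervalIntegrable 0 1)]
    apply intervalIntegral.integral_congr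
    intro s _
    have h : Real.exp ((w j - c) * s) = Real.exp (w j * s) * Real.exp (-(c * s)) := by
      rw [← Real.exp_add]; ring_nf
    dsimp only
    rw [h]
    ring
  have hI1 : (∫ s in (0:ℝ)..1, w j * Real.exp ((w j - c) * s))
      = w j * ((1 - Real.exp (-a)) / a) := by
    rw [intervalIntegral.integral_const_mul, integ_exp_mul (w j - c) (by linarith) 1]
    have h1 : w j - c = -a := by rw [hadef]; ring
    rw [mul_one, h1, div_neg, ← neg_div, neg_sub]
  -- bound on the remainder integral
  have hI2 : |∫ s in (0:ℝ)..1, w j * Real.exp (w j * s) * (fP w E s - Real.exp (-(c * s)))|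
      ≤ w j * Real.exp (w j) * Qc w / c ^ 2 := by
    have hbound : ∀ s ∈ Set.Icc (0:ℝ) 1,
        |w j * Real.exp (w j * s) * (fP w E s - Real.exp (-(c * s)))|
          ≤ w j * Real.exp (w j) * (Qc w / c ^ 2) := by
      intro s hs
      rw [abs_mul, abs_mul, abs_of_pos hwj, abs_of_pos (Real.exp_pos _)]
      have hexps : Real.exp (w j * s) ≤ Real.exp (w j) := by
        apply Real.exp_le_exp.mpr; nlinarith [hs.1, hs.2]
      have hr := r2_bound hw hE s hs
      apply mul_le_mul (mul_le_mul_of_nonneg_left hexps hwj.le) hr (abs_nonneg _) (by positivity)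
    have hmain := abs_integ_le zero_le_one hcont_r
      (continuous_const : Continuous fun _ : ℝ => w j * Real.exp (w j) * (Qc w / c ^ 2)) hbound
    rw [intervalIntegral.integral_const] at hmain
    calc |∫ s in (0:ℝ)..1, w j * Real.exp (w j * s) * (fP w E s - Real.exp (-(c * s)))|
        ≤ ((1:ℝ) - 0) • (w j * Real.exp (w j) * (Qc w / c ^ 2)) := hmain
      _ = w j * Real.exp (w j) * Qc w / c ^ 2 := by
          rw [sub_zero, one_smul]; ring
  have hI2' : w j * Real.exp (w j) * Qc w / c ^ 2 ≤ w j * Real.exp (w j) * Qc w / E ^ 2 := by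
    gcongr
    · have := Qc_nonneg hw
      positivity
    · rw [hcdef]; linarith
  -- the main term estimate
  have h1a : |1 / a - 1 / E| ≤ S / E ^ 2 := by
    have e : 1 / a - 1 / E = (E - a) / (a * E) := by
      field_simp
    have hEa : E - a = -(S - w j) := by rw [hadef, hcdef]; ring
    rw [e, hEa, abs_div, abs_neg, abs_of_nonneg (by linarith : (0:ℝ) ≤ S - w j),
      abs_of_pos (by positivity : (0:ℝ) < a * E)]
    apply div_le_div₀ hS0 (by linarith) (by positivity)
    nlinarith
  have h2a : Real.exp (-a) / a ≤ 4 / E ^ 2 := by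
    calc Real.exp (-a) / a ≤ Real.exp (-a) := div_le_self (Real.exp_pos _).le ha1
      _ ≤ Real.exp (-E) := Real.exp_le_exp.mpr (by linarith)
      _ ≤ 4 / E ^ 2 := exp_neg_le_four_div_sq hE1
  have hT : |w j * ((1 - Real.exp (-a)) / a) - w j / E| ≤ w j * (S + 4) / E ^ 2 := by
    have e : w j * ((1 - Real.exp (-a)) / a) - w j / E
        = w j * ((1 / a - 1 / E) - Real.exp (-a) / a) := by ring
    rw [e, abs_mul, abs_of_pos hwj]
    have htr : |(1 / a - 1 / E) - Real.exp (-a) / a| ≤ S / E ^ 2 + 4 / E ^ 2 := by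
      have hpos : |Real.exp (-a) / a| = Real.exp (-a) / a := abs_of_pos (by positivity)
      have htri2 : |(1 / a - 1 / E) - Real.exp (-a) / a|
          ≤ |1 / a - 1 / E| + |Real.exp (-a) / a| := by
        rw [sub_eq_add_neg]
        exact (abs_add_le _ _).trans (by rw [abs_neg])
      rw [hpos] at htri2
      linarith
    calc w j * |(1 / a - 1 / E) - Real.exp (-a) / a| ≤ w j * (S / E ^ 2 + 4 / E ^ 2) :=
          mul_le_mul_of_nonneg_left htr hwj.le
      _ = w j * (S + 4) / E ^ 2 := by ring
  -- assemble
  have hexpw1 : Real.exp (-w j) ≤ 1 := by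
    calc Real.exp (-w j) ≤ Real.exp 0 := Real.exp_le_exp.mpr (by linarith)
      _ = 1 := Real.exp_zero
  have hgeq : gP w E j 1 = Real.exp (-w j) *
      ((w j * ((1 - Real.exp (-a)) / a))
        + ∫ s in (0:ℝ)..1, w j * Real.exp (w j * s) * (fP w E s - Real.exp (-(c * s)))) := by
    rw [gP_eq, hsplit, hI1, mul_one]
  set I2 := ∫ s in (0:ℝ)..1, w j * Real.exp (w j * s) * (fP w E s - Real.exp (-(c * s)))
  have hdiff : gP w E j 1 - w j / E * Real.exp (-w j)
      = Real.exp (-w j) * ((w j * ((1 - Real.exp (-a)) / a) - w j / E) + I2) := by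
    rw [hgeq]; ring
  rw [hdiff, abs_mul, abs_of_pos (Real.exp_pos _)]
  calc Real.exp (-w j) * |(w j * ((1 - Real.exp (-a)) / a) - w j / E) + I2|
      ≤ 1 * (|w j * ((1 - Real.exp (-a)) / a) - w j / E| + |I2|) := by
        apply mul_le_mul hexpw1 (abs_add_le _ _) (abs_nonneg _) zero_le_one
    _ ≤ 1 * (w j * (S + 4) / E ^ 2 + w j * Real.exp (w j) * Qc w / E ^ 2) := by
        apply mul_le_mul_of_nonneg_left (add_le_add hT (hI2.trans hI2')) zero_le_one
    _ = (w j * (S + 4) + w j * Real.exp (w j) * Qc w) / E ^ 2 := by ring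

end endgame

/-- Multi-child case of Lemma 2 at `t = 1`: as `E → ∞`, the probability of having moved
from the parent to its `j`-th child after unit time is `(w j / E)·e^{-w j} + O(1/E²)` —
independent of the number of children — and the probability of remaining at the parent
is `O(1/E²)`. -/
theorem ssmc_multi_child_asymptotics (d : ℕ) (hd : 1 ≤ d) (w : Fin d → ℝ)
    (hw : ∀ j, 0 < w j) :
    (∀ j : Fin d,
      (fun E : ℝ => (NormedSpace.exp (-(ssmcStar d w E))) j.succ 0
          - w j / E * Real.exp (-w j))
        =O[atTop] fun E : ℝ => (E ^ 2)⁻¹) ∧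
    ((fun E : ℝ => (NormedSpace.exp (-(ssmcStar d w E))) 0 0)
        =O[atTop] fun E : ℝ => (E ^ 2)⁻¹) := by
  have hkeyf : ∀ E : ℝ, NormedSpace.exp (-(ssmcStar d w E)) 0 0 = fP w E 1 := by
    intro E
    rw [fP, one_smul, AM]
  have hkeyg : ∀ (j : Fin d) (E : ℝ),
      NormedSpace.exp (-(ssmcStar d w E)) j.succ 0 = gP w E j 1 := by
    intro j E
    rw [gP, one_smul, AM]
  constructor
  · intro j
    rw [isBigO_iff]
    refine ⟨w j * ((∑ i, w i) + 4) + w j * Real.exp (w j) * Qc w, ?_⟩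
    filter_upwards [eventually_ge_atTop (2 * (∑ i, w i) + 1),
      eventually_gt_atTop (0:ℝ)] with E hE hE0
    rw [hkeyg j E, Real.norm_eq_abs, Real.norm_eq_abs,
      abs_of_pos (by positivity : (0:ℝ) < (E ^ 2)⁻¹), ← div_eq_mul_inv]
    exact final_g hw hE j
  · rw [isBigO_iff]
    refine ⟨4 + Qc w, ?_⟩
    filter_upwards [eventually_ge_atTop (2 * (∑ i, w i) + 1),
      eventually_gt_atTop (0:ℝ)] with E hE hE0
    rw [hkeyf E, Real.norm_eq_abs, Real.norm_eq_abs,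
      abs_of_pos (by positivity : (0:ℝ) < (E ^ 2)⁻¹), ← div_eq_mul_inv]
    exact final_f hw hE
end

section
/- Let V be a finite type with depth function d : V → ℕ, a unique root r with d r = 0, a parent map par : V → V with d (par y) = d y - 1 whenever d y ≥ 1, and maximal depth D such that {v | d v = j} is nonempty for every j ≤ D. Define p : ℕ → V → ℝ by p 0 v = (1 if d v = 0 else 0) and, for each j, p (j+1) y = p j (par y) / (∑_{y' : d y' = j+1} p j (par y')) if d y = j+1, and p (j+1) y = 0 otherwise. Then for every j ≤ D and every y with d y = j, p j y = 1 / card {v | d v = j}; i.e., the limiting discrete process with equal edge weights is uniform on each depth layer. -/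
variable {V : Type*} [Fintype V] [DecidableEq V]

/-- The limiting discrete process for a search tree with equal edge weights:
`p 0` is the indicator of depth `0`, and `p (j+1)` is supported on layer `j+1`,
proportional to `p j (par y)`. -/
noncomputable def uniformLimit (d : V → ℕ) (par : V → V) : ℕ → V → ℝ
  | 0 => fun v => if d v = 0 then 1 else 0
  | j + 1 => fun y =>
      if d y = j + 1 then
        uniformLimit d par j (par y) /
          ∑ y' ∈ Finset.univ.filter (fun y' => d y' = j + 1), uniformLimit d par j (par y')
      else 0

/-- Corollary to Theorem 3: on a search tree with depth function `d`, unique root `r`,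
parent map `par`, and maximal depth `D`, the limiting discrete process with equal edge
weights is uniform on each depth layer. -/
theorem uniformLimit_eq_uniform (d : V → ℕ) (r : V) (par : V → V) (D : ℕ)
    (hroot : d r = 0) (hroot_unique : ∀ v, d v = 0 → v = r)
    (hpar : ∀ y, 1 ≤ d y → d (par y) = d y - 1)
    (hD : ∀ j ≤ D, ∃ v, d v = j) :
    ∀ j ≤ D, ∀ y, d y = j →
      uniformLimit d par j y = 1 / ((Finset.univ.filter (fun v => d v = j)).card : ℝ) := by
  intro j
  induction j with
  | zero =>
    intro _ y hy
    have : Finset.univ.filter (fun v => d v = 0) = {r} := by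
      ext v
      simp only [Finset.mem_filter, Finset.mem_univ, true_and, Finset.mem_singleton]
      exact ⟨fun h => hroot_unique v h, fun h => h ▸ hroot⟩
    simp [uniformLimit, hy, this]
  | succ j ih =>
    intro hj y hy
    have hjD : j ≤ D := Nat.le_of_succ_le hj
    have hne : (Finset.univ.filter (fun v => d v = j + 1)).Nonempty := by
      obtain ⟨v, hv⟩ := hD (j + 1) hj
      exact ⟨v, by simp [hv]⟩
    have hcard : ((Finset.univ.filter (fun v => d v = j + 1)).card : ℝ) ≠ 0 := by
      exact_mod_cast Finset.card_ne_zero_of_mem hne.choose_spec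
    have hjcard : ((Finset.univ.filter (fun v => d v = j)).card : ℝ) ≠ 0 := by
      obtain ⟨v, hv⟩ := hD j hjD
      exact_mod_cast Finset.card_ne_zero_of_mem (by simp [hv] :
        v ∈ Finset.univ.filter (fun v => d v = j))
    have hval : ∀ y', d y' = j + 1 → uniformLimit d par j (par y')
        = 1 / ((Finset.univ.filter (fun v => d v = j)).card : ℝ) := by
      intro y' hy'
      apply ih hjD
      have := hpar y' (by omega)
      omega
    have hsum : ∑ y' ∈ Finset.univ.filter (fun y' => d y' = j + 1),
        uniformLimit d par j (par y')
        = ((Finset.univ.filter (fun v => d v = j + 1)).card : ℝ) *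
          (1 / ((Finset.univ.filter (fun v => d v = j)).card : ℝ)) := by
      rw [Finset.sum_congr rfl (fun y' hy' => hval y' (by simpa using hy')),
        Finset.sum_const, nsmul_eq_mul]
    rw [uniformLimit]
    beta_reduce
    rw [if_pos hy, hsum, hval y hy]
    field_simp
end

section
/- (GWW variant fails on the long-teeth comb.) Fix N ≥ 1 and D ≥ 1. Under the uniform probability measure on functions f : Fin N → (Fin D → Bool), the probability of the event {f | ∃ i, ∀ k, f i k = true} equals 1 - (1 - 2^{-D})^N, which is at most N / 2^D. -/
open Finset

lemma gww_compl_card (N D : ℕ) :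
    (Finset.univ.filter
      (fun f : Fin N → Fin D → Bool => ¬ ∃ i, ∀ k, f i k = true)).card
      = (2 ^ D - 1) ^ N := by
  have h1 : (Finset.univ.filter
      (fun f : Fin N → Fin D → Bool => ¬ ∃ i, ∀ k, f i k = true))
      = Fintype.piFinset (fun _ : Fin N =>
          Finset.univ.filter (fun g : Fin D → Bool => ¬ ∀ k, g k = true)) := by
    ext f
    simp [Fintype.mem_piFinset]
  have h2 : (Finset.univ.filter (fun g : Fin D → Bool => ¬ ∀ k, g k = true)).card
      = 2 ^ D - 1 := by
    have hsum : (Finset.univ.filter (fun g : Fin D → Bool => ¬ ∀ k, g k = true)).card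
        = (Finset.univ : Finset (Fin D → Bool)).card
          - (Finset.univ.filter (fun g : Fin D → Bool => ∀ k, g k = true)).card := by
      rw [Finset.filter_not, Finset.card_sdiff_of_subset (Finset.filter_subset _ _)]
    have hpos : (Finset.univ.filter (fun g : Fin D → Bool => ∀ k, g k = true)).card = 1 := by
      have h3 : (Finset.univ.filter (fun g : Fin D → Bool => ∀ k, g k = true))
          = {fun _ => true} := by
        ext g
        simp [funext_iff]
      rw [h3, Finset.card_singleton]
    have hcard : (Finset.univ : Finset (Fin D → Bool)).card = 2 ^ D := by
      rw [Finset.card_univ, Fintype.card_fun, Fintype.card_bool, Fintype.card_fin]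
    rw [hsum, hpos, hcard]
  rw [h1, Fintype.card_piFinset]
  simp only [h2]
  rw [Finset.prod_const, Finset.card_univ, Fintype.card_fin]

/-- Theorem 5 (GWW variant fails on the long-teeth comb): under the uniform probability
measure on functions `f : Fin N → (Fin D → Bool)` (each of `N` walkers making `D`
independent uniform binary choices), the probability that some walker follows the spine
(the all-`true` string) equals `1 - (1 - 2^{-D})^N`, which is at most `N / 2^D`. -/
theorem gww_long_teeth_failure (N D : ℕ) (hN : 1 ≤ N) (hD : 1 ≤ D) :
    ((Finset.univ.filter
        (fun f : Fin N → Fin D → Bool => ∃ i, ∀ k, f i k = true)).card : ℝ) /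
        (Fintype.card (Fin N → Fin D → Bool) : ℝ)
      = 1 - (1 - ((2 : ℝ) ^ D)⁻¹) ^ N ∧
    ((Finset.univ.filter
        (fun f : Fin N → Fin D → Bool => ∃ i, ∀ k, f i k = true)).card : ℝ) /
        (Fintype.card (Fin N → Fin D → Bool) : ℝ)
      ≤ (N : ℝ) / 2 ^ D := by
  have htot : (Fintype.card (Fin N → Fin D → Bool)) = (2 ^ D) ^ N := by
    rw [Fintype.card_fun, Fintype.card_fun, Fintype.card_bool, Fintype.card_fin,
      Fintype.card_fin]
  have hsum : (Finset.univ.filter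
        (fun f : Fin N → Fin D → Bool => ¬ ∃ i, ∀ k, f i k = true)).card
      = (Finset.univ : Finset (Fin N → Fin D → Bool)).card
        - (Finset.univ.filter
            (fun f : Fin N → Fin D → Bool => ∃ i, ∀ k, f i k = true)).card := by
    rw [Finset.filter_not, Finset.card_sdiff_of_subset (Finset.filter_subset _ _)]
  have hfle : (Finset.univ.filter
        (fun f : Fin N → Fin D → Bool => ∃ i, ∀ k, f i k = true)).card
      ≤ (Finset.univ : Finset (Fin N → Fin D → Bool)).card :=
    Finset.card_filter_le _ _
  have hcompl := gww_compl_card N D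
  have hcardU : (Finset.univ : Finset (Fin N → Fin D → Bool)).card = (2 ^ D) ^ N := by
    rw [Finset.card_univ, htot]
  have hA : (Finset.univ.filter
      (fun f : Fin N → Fin D → Bool => ∃ i, ∀ k, f i k = true)).card
      = (2 ^ D) ^ N - (2 ^ D - 1) ^ N := by
    rw [hcompl, hcardU] at hsum
    rw [hcardU] at hfle
    rw [hsum]
    exact (Nat.sub_sub_self hfle).symm
  have hle : (2 ^ D - 1) ^ N ≤ (2 ^ D) ^ N :=
    Nat.pow_le_pow_left (Nat.sub_le _ _) N
  have h2D : (0 : ℝ) < 2 ^ D := by positivity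
  have hone : (1 : ℕ) ≤ 2 ^ D := Nat.one_le_two_pow
  have hcast : ((Finset.univ.filter
      (fun f : Fin N → Fin D → Bool => ∃ i, ∀ k, f i k = true)).card : ℝ)
      = ((2 : ℝ) ^ D) ^ N - ((2 : ℝ) ^ D - 1) ^ N := by
    rw [hA, Nat.cast_sub hle]
    congr 1
    · push_cast; ring
    · rw [Nat.cast_pow, Nat.cast_sub hone]; push_cast; ring
  have hcast2 : ((((2 : ℕ) ^ D) ^ N : ℕ) : ℝ) = ((2 : ℝ) ^ D) ^ N := by
    push_cast; ring
  have heq : ((Finset.univ.filter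
      (fun f : Fin N → Fin D → Bool => ∃ i, ∀ k, f i k = true)).card : ℝ) /
      (Fintype.card (Fin N → Fin D → Bool) : ℝ)
      = 1 - (1 - ((2 : ℝ) ^ D)⁻¹) ^ N := by
    rw [hcast, htot, hcast2]
    rw [div_eq_iff (by positivity)]
    have h3 : (1 - ((2 : ℝ) ^ D)⁻¹) = ((2 : ℝ) ^ D - 1) / (2 ^ D) := by
      field_simp
    rw [h3, div_pow, sub_mul, one_mul, div_mul_cancel₀]
    positivity
  refine ⟨heq, ?_⟩
  rw [heq]
  set x : ℝ := ((2 : ℝ) ^ D)⁻¹ with hxdef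
  have hx : (0 : ℝ) ≤ x := by positivity
  have hx1 : x ≤ 1 := by
    rw [hxdef]
    apply inv_le_one_of_one_le₀
    exact_mod_cast hone
  have hber : 1 + (N : ℝ) * (-x) ≤ (1 + (-x)) ^ N := by
    apply one_add_mul_le_pow
    linarith
  have hber' : 1 - (N : ℝ) * x ≤ (1 - x) ^ N := by
    have h4 : (1 : ℝ) + (-x) = 1 - x := by ring
    rw [h4] at hber
    linarith
  have hfin : (N : ℝ) / 2 ^ D = (N : ℝ) * x := by
    rw [hxdef]; ring
  rw [hfin]
  linarith
end

section
/- (Blockwise norm conservation under Schrödinger evolution.) Let n be a natural number, S ⊆ Fin n, and H : ℝ → Matrix (Fin n) (Fin n) ℂ such that for every t, H t is Hermitian and (H t) y x = 0 whenever exactly one of x, y lies in S. Suppose ψ : ℝ → (Fin n → ℂ) satisfies, for every t, HasDerivAt ψ (-(Complex.I) • ((H t).mulVec (ψ t))) t (i.e., i·ψ' = H(t)ψ). Then the function t ↦ ∑_{x ∈ S} ‖ψ t x‖² is constant; in particular ∑_{x ∈ S} ‖ψ t x‖² = ∑_{x ∈ S} ‖ψ 0 x‖² for all t. -/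
open Matrix


/-- Proposition 7 (blockwise norm conservation under Schrödinger evolution): if the
Hermitian Hamiltonian `H(t)` has no coupling between a set `S` of indices and its
complement, then Schrödinger evolution `i·ψ' = H(t)ψ` conserves the squared norm of the
component of `ψ` supported on `S`. -/
theorem block_norm_conservation (n : ℕ) (S : Finset (Fin n))
    (H : ℝ → Matrix (Fin n) (Fin n) ℂ)
    (hherm : ∀ t, (H t).IsHermitian)
    (hblock : ∀ t, ∀ x y : Fin n, ((x ∈ S ∧ y ∉ S) ∨ (x ∉ S ∧ y ∈ S)) → H t y x = 0)
    (ψ : ℝ → Fin n → ℂ)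
    (hψ : ∀ t, HasDerivAt ψ (-(Complex.I) • ((H t).mulVec (ψ t))) t) :
    ∀ t : ℝ, ∑ x ∈ S, ‖ψ t x‖ ^ 2 = ∑ x ∈ S, ‖ψ 0 x‖ ^ 2 := by
  set v : ℝ → Fin n → ℂ := fun t => -(Complex.I) • ((H t).mulVec (ψ t)) with hv
  set g : ℝ → ℝ := fun t => ∑ x ∈ S, ((starRingEnd ℂ) (ψ t x) * ψ t x).re with hg
  have hcomp : ∀ t (x : Fin n), HasDerivAt (fun s => ψ s x) (v t x) t := fun t x =>
    ((ContinuousLinearMap.proj x : (Fin n → ℂ) →L[ℝ] ℂ).hasFDerivAt).comp_hasDerivAt t (hψ t)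
  have hterm : ∀ t (x : Fin n), HasDerivAt (fun s => ((starRingEnd ℂ) (ψ s x) * ψ s x).re)
      (((starRingEnd ℂ) (v t x) * ψ t x + (starRingEnd ℂ) (ψ t x) * v t x).re) t := by
    intro t x
    have h := hcomp t x
    have hc : HasDerivAt (fun s => (starRingEnd ℂ) (ψ s x)) ((starRingEnd ℂ) (v t x)) t :=
      by have h2 := (Complex.conjCLE.toContinuousLinearMap.hasFDerivAt (x := ψ t x)).comp_hasDerivAt t h; exact h2
    exact (Complex.reCLM.hasFDerivAt).comp_hasDerivAt t (hc.mul h)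
  have hzero : ∀ t, (∑ x ∈ S, ((starRingEnd ℂ) (v t x) * ψ t x + (starRingEnd ℂ) (ψ t x) * v t x).re) = 0 := by
    intro t
    rw [← Complex.re_sum]
    have key : (∑ x ∈ S, ((starRingEnd ℂ) (v t x) * ψ t x + (starRingEnd ℂ) (ψ t x) * v t x)) = 0 := by
      set Z : ℂ := ∑ x ∈ S, (starRingEnd ℂ) (ψ t x) * ((H t).mulVec (ψ t)) x with hZ
      have hmix : ∑ x ∈ S, ((starRingEnd ℂ) (v t x) * ψ t x + (starRingEnd ℂ) (ψ t x) * v t x)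
          = Complex.I * (starRingEnd ℂ) Z - Complex.I * Z := by
        rw [hZ, map_sum, Finset.mul_sum, Finset.mul_sum, ← Finset.sum_sub_distrib]
        refine Finset.sum_congr rfl fun x hx => ?_
        simp only [hv, Pi.smul_apply, smul_eq_mul, _root_.map_mul, map_neg, Complex.conj_I, Complex.conj_conj]
        ring
      have hZ' : Z = ∑ x ∈ S, ∑ y ∈ S, (starRingEnd ℂ) (ψ t x) * (H t x y * ψ t y) := by
        rw [hZ]
        refine Finset.sum_congr rfl fun x hx => ?_
        rw [Matrix.mulVec, dotProduct, Finset.mul_sum]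
        rw [← Finset.sum_filter_add_sum_filter_not Finset.univ (· ∈ S)]
        have h2 : ∑ y ∈ Finset.univ.filter (· ∉ S), (starRingEnd ℂ) (ψ t x) * (H t x y * ψ t y) = 0 := by
          refine Finset.sum_eq_zero fun y hy => ?_
          have hyS : y ∉ S := by simpa using (Finset.mem_filter.mp hy).2
          rw [hblock t y x (Or.inr ⟨hyS, hx⟩)]; ring
        have h1 : Finset.univ.filter (· ∈ S) = S := by ext z; simp
        rw [h2, add_zero, h1]
      have hZreal : (starRingEnd ℂ) Z = Z := by
        calc (starRingEnd ℂ) Z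
            = ∑ x ∈ S, ∑ y ∈ S, (starRingEnd ℂ) (ψ t y) * (H t y x * ψ t x) := by
              rw [hZ', map_sum]
              refine Finset.sum_congr rfl fun x hx => ?_
              rw [map_sum]
              refine Finset.sum_congr rfl fun y hy => ?_
              have hsym := (hherm t).apply y x
              rw [Complex.star_def] at hsym
              simp only [_root_.map_mul, Complex.conj_conj, hsym]
              ring
          _ = Z := by rw [hZ', Finset.sum_comm]
      rw [hmix, hZreal]; ring
    rw [key]; simp
  have hgderiv : ∀ t, HasDerivAt g 0 t := by
    intro t
    have := HasDerivAt.fun_sum (fun x (hx : x ∈ S) => hterm t x)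
    rw [hzero t] at this
    exact this
  have hconst : ∀ t, g t = g 0 :=
    fun t => is_const_of_deriv_eq_zero (f := g) (fun s => (hgderiv s).differentiableAt)
      (fun s => (hgderiv s).deriv) t 0
  intro t
  have hnorm : ∀ s (x : Fin n), ((starRingEnd ℂ) (ψ s x) * ψ s x).re = ‖ψ s x‖ ^ 2 := by
    intro s x
    rw [← Complex.normSq_eq_conj_mul_self]
    simp [Complex.sq_norm]
  calc ∑ x ∈ S, ‖ψ t x‖ ^ 2 = g t := by simp [hg, hnorm]
    _ = g 0 := hconst t
    _ = ∑ x ∈ S, ‖ψ 0 x‖ ^ 2 := by simp [hg, hnorm]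
end

section
/- (Symmetric branch bound for quantum annealing.) Fix a real weight v > 0 and let L : Matrix (Fin 3) (Fin 3) ℂ be the (complexified) graph Laplacian of the 3-vertex star with root r = 0 and children x = 1, y = 2 with equal edge weights v: L = !![2v, -v, -v; -v, v, 0; -v, 0, v]. Let a, b : ℝ → ℝ, let W : Matrix (Fin 3) (Fin 3) ℂ be real diagonal with W₁₁ = W₂₂, and set H t = (a t) • L + (b t) • W. Suppose ψ : ℝ → (Fin 3 → ℂ) satisfies HasDerivAt ψ (-(Complex.I) • ((H t).mulVec (ψ t))) t for all t, with ψ 0 1 = 0 and ψ 0 2 = 0. Then for every t_f ≥ 0: ψ t_f 1 = ψ t_f 2, and ‖ψ t_f 1‖ ≤ ‖ψ 0 0‖ / √2. -/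
open Matrix

/-- Proposition 8 (symmetric branch bound for quantum annealing): on the 3-vertex star
with root `0` and children `1, 2` joined by equal edge weights `v`, with a real diagonal
objective symmetric under exchanging the children, Schrödinger evolution of
`H t = a t • L + b t • W` starting with no amplitude on the children keeps the children's
amplitudes equal, and each is bounded by `‖ψ 0 0‖/√2`. -/
theorem symmetric_branch_bound (v : ℝ) (hv : 0 < v) (a b : ℝ → ℝ) (W₀ W₁ : ℝ)
    (ψ : ℝ → Fin 3 → ℂ)
    (hψ : ∀ t : ℝ, HasDerivAt ψ
      (-(Complex.I) •
        (((a t) • (!![((2 * v : ℝ) : ℂ), -(v : ℂ), -(v : ℂ);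
              -(v : ℂ), (v : ℂ), 0;
              -(v : ℂ), 0, (v : ℂ)] : Matrix (Fin 3) (Fin 3) ℂ)
          + (b t) • (Matrix.diagonal ![((W₀ : ℝ) : ℂ), ((W₁ : ℝ) : ℂ), ((W₁ : ℝ) : ℂ)]
              : Matrix (Fin 3) (Fin 3) ℂ)).mulVec (ψ t))) t)
    (h1 : ψ 0 1 = 0) (h2 : ψ 0 2 = 0) :
    ∀ tf : ℝ, 0 ≤ tf → ψ tf 1 = ψ tf 2 ∧ ‖ψ tf 1‖ ≤ ‖ψ 0 0‖ / Real.sqrt 2 := by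
  open Complex in
  have key : ∀ t : ℝ,
      HasDerivAt (fun s => ψ s 0)
        (-I * ((a t : ℂ) * (2*v) * ψ t 0 - (a t : ℂ) * v * ψ t 1 - (a t : ℂ) * v * ψ t 2
          + (b t : ℂ) * W₀ * ψ t 0)) t
    ∧ HasDerivAt (fun s => ψ s 1)
        (-I * (-(a t : ℂ) * v * ψ t 0 + (a t : ℂ) * v * ψ t 1 + (b t : ℂ) * W₁ * ψ t 1)) t
    ∧ HasDerivAt (fun s => ψ s 2)
        (-I * (-(a t : ℂ) * v * ψ t 0 + (a t : ℂ) * v * ψ t 2 + (b t : ℂ) * W₁ * ψ t 2)) t := by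
    intro t
    have hd : (Matrix.diagonal ![((W₀ : ℝ) : ℂ), ((W₁ : ℝ) : ℂ), ((W₁ : ℝ) : ℂ)] : Matrix (Fin 3) (Fin 3) ℂ)
        = !![(W₀:ℂ),0,0;0,(W₁:ℂ),0;0,0,(W₁:ℂ)] := by
      ext i j; fin_cases i <;> fin_cases j <;> simp [Matrix.diagonal, Matrix.vecHead, Matrix.vecTail]
    simp only [hd] at hψ
    have h := hasDerivAt_pi.1 (hψ t)
    refine ⟨(h 0).congr_deriv ?_, (h 1).congr_deriv ?_, (h 2).congr_deriv ?_⟩ <;>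
    · simp [Matrix.mulVec, dotProduct, Fin.sum_univ_three, Matrix.add_apply, Matrix.smul_apply,
        Matrix.vecHead, Matrix.vecTail, Fin.succ_zero_eq_one, Fin.succ_one_eq_two,
        Complex.real_smul, smul_eq_mul]
      push_cast
      ring
  open Complex in
  -- Part 1: symmetry
  have hsym : ∀ t : ℝ, ψ t 1 = ψ t 2 := by
    have hg : ∀ t : ℝ, HasDerivAt (fun s => ψ s 1 - ψ s 2)
        (-I * ((a t * v + b t * W₁ : ℝ) : ℂ) * (ψ t 1 - ψ t 2)) t := by
      intro t
      refine ((key t).2.1.sub (key t).2.2).congr_deriv ?_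
      push_cast; ring
    set f : ℝ → ℝ := fun t => (ψ t 1 - ψ t 2).re ^ 2 + (ψ t 1 - ψ t 2).im ^ 2 with hf_def
    have hf : ∀ t : ℝ, HasDerivAt f 0 t := by
      intro t
      have hre : HasDerivAt (fun s => (ψ s 1 - ψ s 2).re)
          ((-I * ((a t * v + b t * W₁ : ℝ) : ℂ) * (ψ t 1 - ψ t 2)).re) t :=
        Complex.reCLM.hasFDerivAt.comp_hasDerivAt t (hg t)
      have him : HasDerivAt (fun s => (ψ s 1 - ψ s 2).im)
          ((-I * ((a t * v + b t * W₁ : ℝ) : ℂ) * (ψ t 1 - ψ t 2)).im) t :=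
        Complex.imCLM.hasFDerivAt.comp_hasDerivAt t (hg t)
      have := ((hre.pow 2).add (him.pow 2))
      refine this.congr_deriv ?_
      simp [Complex.mul_re, Complex.mul_im]
      ring
    have hconst := is_const_of_deriv_eq_zero (𝕜 := ℝ)
      (fun t => (hf t).differentiableAt) (fun t => (hf t).deriv)
    intro t
    have h0 : f 0 = 0 := by simp [hf_def, h1, h2]
    have ht : f t = 0 := (hconst t 0).trans h0
    simp only [hf_def] at ht
    have hre0 : (ψ t 1 - ψ t 2).re = 0 := by nlinarith [sq_nonneg (ψ t 1 - ψ t 2).re, sq_nonneg (ψ t 1 - ψ t 2).im]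
    have him0 : (ψ t 1 - ψ t 2).im = 0 := by nlinarith [sq_nonneg (ψ t 1 - ψ t 2).re, sq_nonneg (ψ t 1 - ψ t 2).im]
    have : ψ t 1 - ψ t 2 = 0 := Complex.ext hre0 him0
    linear_combination this
  -- Part 2: norm conservation
  have hN : ∀ t : ℝ, HasDerivAt (fun s => (ψ s 0).re ^ 2 + (ψ s 0).im ^ 2
      + ((ψ s 1).re ^ 2 + (ψ s 1).im ^ 2) + ((ψ s 2).re ^ 2 + (ψ s 2).im ^ 2)) 0 t := by
    intro t
    obtain ⟨k0, k1, k2⟩ := key t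
    have r0 := Complex.reCLM.hasFDerivAt.comp_hasDerivAt t k0
    have i0 := Complex.imCLM.hasFDerivAt.comp_hasDerivAt t k0
    have r1 := Complex.reCLM.hasFDerivAt.comp_hasDerivAt t k1
    have i1 := Complex.imCLM.hasFDerivAt.comp_hasDerivAt t k1
    have r2 := Complex.reCLM.hasFDerivAt.comp_hasDerivAt t k2
    have i2 := Complex.imCLM.hasFDerivAt.comp_hasDerivAt t k2
    have h := (((r0.pow 2).add (i0.pow 2)).add ((r1.pow 2).add (i1.pow 2))).add
      ((r2.pow 2).add (i2.pow 2))
    refine h.congr_deriv ?_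
    simp [Complex.mul_re, Complex.mul_im, Complex.add_re, Complex.add_im,
      Complex.sub_re, Complex.sub_im]
    ring
  have hNconst := is_const_of_deriv_eq_zero (𝕜 := ℝ)
    (fun t => (hN t).differentiableAt) (fun t => (hN t).deriv)
  intro tf _
  refine ⟨hsym tf, ?_⟩
  have hNt := hNconst tf 0
  simp only [h1, h2, Complex.zero_re, Complex.zero_im] at hNt
  have heq := hsym tf
  have hb : 2 * ((ψ tf 1).re ^ 2 + (ψ tf 1).im ^ 2) ≤ (ψ 0 0).re ^ 2 + (ψ 0 0).im ^ 2 := by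
    rw [heq] at hNt ⊢
    nlinarith [sq_nonneg (ψ tf 0).re, sq_nonneg (ψ tf 0).im]
  have hq : ‖ψ tf 1‖ ^ 2 = (ψ tf 1).re ^ 2 + (ψ tf 1).im ^ 2 := by
    rw [Complex.sq_norm, Complex.normSq_apply]; ring
  have hp : ‖ψ 0 0‖ ^ 2 = (ψ 0 0).re ^ 2 + (ψ 0 0).im ^ 2 := by
    rw [Complex.sq_norm, Complex.normSq_apply]; ring
  calc ‖ψ tf 1‖ = Real.sqrt (‖ψ tf 1‖ ^ 2) := (Real.sqrt_sq (norm_nonneg _)).symm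
    _ ≤ Real.sqrt (‖ψ 0 0‖ ^ 2 / 2) := by
        apply Real.sqrt_le_sqrt; rw [hq, hp]; linarith
    _ = Real.sqrt (‖ψ 0 0‖ ^ 2) / Real.sqrt 2 := Real.sqrt_div (sq_nonneg _) 2
    _ = ‖ψ 0 0‖ / Real.sqrt 2 := by rw [Real.sqrt_sq (norm_nonneg _)]
end

section
/- (Fleming–Viot resampling count.) Let V be a type, N ≥ 1, x : Fin N → V a configuration of N walkers, v : V, and for a configuration z let η_v(z) = card {k : Fin N | z k = v}. Then for every index i : Fin N, ∑_{j ≠ i} η_v(Function.update x i (x j)) equals N·η_v(x) if x i ≠ v, and equals N·(η_v(x) - 1) if x i = v. -/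
open Finset

/-- Fleming–Viot resampling count (Appendix A.2): for a configuration `x` of `N` walkers,
with `η_v(z)` the number of walkers of `z` at site `v`, summing the count after moving
walker `i` to the site of walker `j` over the `N-1` indices `j ≠ i` gives `N·η_v(x)` when
`x i ≠ v`, and `N·(η_v(x) - 1)` when `x i = v`. -/
theorem fleming_viot_resampling_count {V : Type*} [DecidableEq V] (N : ℕ) (hN : 1 ≤ N)
    (x : Fin N → V) (v : V) (i : Fin N) :
    ∑ j ∈ Finset.univ.erase i,
        (Finset.univ.filter (fun k : Fin N => Function.update x i (x j) k = v)).card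
      = if x i = v
          then N * ((Finset.univ.filter (fun k : Fin N => x k = v)).card - 1)
          else N * (Finset.univ.filter (fun k : Fin N => x k = v)).card := by
  classical
  set A := ((Finset.univ.erase i).filter (fun k : Fin N => x k = v)).card with hA
  have huniv : (Finset.univ : Finset (Fin N)) = insert i (Finset.univ.erase i) := by
    rw [Finset.insert_erase (Finset.mem_univ i)]
  -- The global count decomposes
  have hη : (Finset.univ.filter (fun k : Fin N => x k = v)).card
      = A + (if x i = v then 1 else 0) := by
    rw [huniv, Finset.filter_insert]
    split <;> simp [A, Finset.card_insert_of_notMem, Finset.mem_filter]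
  -- count after moving walker i to site x j
  have hcount : ∀ j ∈ Finset.univ.erase i,
      (Finset.univ.filter (fun k : Fin N => Function.update x i (x j) k = v)).card
        = A + (if x j = v then 1 else 0) := by
    intro j hj
    have h1 : ((Finset.univ.erase i).filter
        (fun k : Fin N => Function.update x i (x j) k = v)) =
        ((Finset.univ.erase i).filter (fun k : Fin N => x k = v)) := by
      apply Finset.filter_congr
      intro k hk
      have : k ≠ i := Finset.ne_of_mem_erase hk
      simp [Function.update_of_ne this]
    rw [huniv, Finset.filter_insert]
    simp only [Function.update_self]
    by_cases h : x j = v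
    · rw [if_pos h, Finset.card_insert_of_notMem (by simp), h1]
      simp [A, h, Nat.add_comm]
    · rw [if_neg h, h1]
      simp [A, h]
  rw [Finset.sum_congr rfl hcount, Finset.sum_add_distrib, Finset.sum_const, smul_eq_mul,
    Finset.card_erase_of_mem (Finset.mem_univ i), Finset.card_univ, Fintype.card_fin]
  have hsum : (∑ j ∈ Finset.univ.erase i, (if x j = v then 1 else 0)) = A := by
    rw [hA, Finset.card_filter]
  rw [hsum, hη]
  obtain ⟨M, rfl⟩ := Nat.exists_eq_add_of_le hN
  by_cases h : x i = v
  · simp only [if_pos h, Nat.add_sub_cancel, Nat.add_sub_cancel_left]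
    ring
  · simp only [if_neg h, Nat.add_zero, Nat.add_sub_cancel_left]
    ring
end
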